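/- arXiv:math/0310232 — 5 statements merged into one kernel-verified Lean document; each statement's English description precedes it below -/
import Mathlib

section
/- Fix d ≥ 1, n ≥ 1, r > 0, γ > 0 and p ∈ [0,1], and suppose P{M_n^{(d)} > γ} ≤ p. Let G be a random geometric graph G(X_n; r) and G′ a random geometric graph G(X_n; r + 2γ), drawn independently of each other. Then P{G is isomorphic to a subgraph of G′} ≥ 1 − p. -/
open MeasureTheory Real

noncomputable section

/-- The uniform probability measure on the unit cube `[0,1]^d`. -/
def cubeMeasure (d : ℕ) : Measure (Fin d → ℝ) :=
  Measure.pi fun _ => volume.restrict (Set.Icc (0 : ℝ) 1)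

/-- The joint law of `n` i.i.d. points, each uniform on `[0,1]^d`. -/
def sampleMeasure (d n : ℕ) : Measure (Fin n → Fin d → ℝ) :=
  Measure.pi fun _ => cubeMeasure d

/-- Euclidean distance on `Fin d → ℝ`. -/
def eDist {d : ℕ} (x y : Fin d → ℝ) : ℝ :=
  Real.sqrt (∑ k, (x k - y k) ^ 2)

lemma eDist_comm {d : ℕ} (x y : Fin d → ℝ) : eDist x y = eDist y x := by
  unfold eDist
  congr 1
  exact Finset.sum_congr rfl fun k _ => by ring

/-- The geometric graph on the points `x 0, …, x (n-1)` with radius `r`: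
distinct `i`, `j` are adjacent iff the Euclidean distance of `x i` and `x j` is at most `r`. -/
def geomGraph {d n : ℕ} (x : Fin n → Fin d → ℝ) (r : ℝ) : SimpleGraph (Fin n) where
  Adj i j := i ≠ j ∧ eDist (x i) (x j) ≤ r
  symm := ⟨fun i j h => ⟨h.1.symm, by rw [eDist_comm]; exact h.2⟩⟩
  loopless := ⟨fun i h => h.1 rfl⟩

/-- A graph property (on labelled vertex sets `Fin m`) is closed under isomorphism. -/
def IsoClosed (A : ∀ m, SimpleGraph (Fin m) → Prop) : Prop :=
  ∀ m, ∀ G G' : SimpleGraph (Fin m), Nonempty (G ≃g G') → (A m G ↔ A m G')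

/-- A graph property is increasing: preserved by adding edges. -/
def IncreasingProp (A : ∀ m, SimpleGraph (Fin m) → Prop) : Prop :=
  ∀ m, ∀ G G' : SimpleGraph (Fin m), G ≤ G' → A m G → A m G'

/-- The probability that a random geometric graph on `n` uniform points in `[0,1]^d`
with radius `r` satisfies the property `A`. -/
def geomProb (d n : ℕ) (A : ∀ m, SimpleGraph (Fin m) → Prop) (r : ℝ) : ENNReal :=
  sampleMeasure d n {x | A n (geomGraph x r)}

/-- Threshold radius `r_A(n, ε)`. -/
def thresholdRadius (d n : ℕ) (A : ∀ m, SimpleGraph (Fin m) → Prop) (ε : ℝ) : ℝ :=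
  sInf {r : ℝ | 0 < r ∧ ENNReal.ofReal ε ≤ geomProb d n A r}

/-- Threshold width `δ_A(n, ε) = r_A(n, 1-ε) - r_A(n, ε)`. -/
def thresholdWidth (d n : ℕ) (A : ∀ m, SimpleGraph (Fin m) → Prop) (ε : ℝ) : ℝ :=
  thresholdRadius d n A (1 - ε) - thresholdRadius d n A ε

/-- The bottleneck matching weight between the point sets `x` and `y`. -/
def bottleneck {d n : ℕ} (x y : Fin n → Fin d → ℝ) : ℝ :=
  ⨅ φ : Equiv.Perm (Fin n), ⨆ i, eDist (x i) (y (φ i))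

/-- The joint law of two independent samples of `n` uniform points in `[0,1]^d`. -/
def pairMeasure (d n : ℕ) : Measure ((Fin n → Fin d → ℝ) × (Fin n → Fin d → ℝ)) :=
  (sampleMeasure d n).prod (sampleMeasure d n)

/-- `G` is isomorphic to a subgraph of `G'`. -/
def IsSubgraphIso {n m : ℕ} (G : SimpleGraph (Fin n)) (G' : SimpleGraph (Fin m)) : Prop :=
  ∃ f : Fin n ↪ Fin m, ∀ i j, G.Adj i j → G'.Adj (f i) (f j)

/-- The property: every vertex has degree at least a quarter of the number of vertices. -/
def minDegProp : ∀ m, SimpleGraph (Fin m) → Prop :=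
  fun m G => ∀ v, (m : ℝ) / 4 ≤ ((G.neighborSet v).ncard : ℝ)

/-- The property of being a complete graph. -/
def completeProp : ∀ m, SimpleGraph (Fin m) → Prop :=
  fun m G => ∀ i j : Fin m, i ≠ j → G.Adj i j

lemma eDist_eq_dist {d : ℕ} (x y : Fin d → ℝ) :
    eDist x y = dist ((WithLp.equiv 2 (Fin d → ℝ)).symm x)
      ((WithLp.equiv 2 (Fin d → ℝ)).symm y) := by
  rw [EuclideanSpace.dist_eq]
  simp [eDist, Real.dist_eq, sq_abs]

lemma eDist_triangle {d : ℕ} (x y z : Fin d → ℝ) :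
    eDist x z ≤ eDist x y + eDist y z := by
  simp only [eDist_eq_dist]
  exact dist_triangle _ _ _

instance unitIntervalProb : IsProbabilityMeasure (volume.restrict (Set.Icc (0 : ℝ) 1)) := by
  constructor
  rw [Measure.restrict_apply MeasurableSet.univ, Set.univ_inter, Real.volume_Icc]
  norm_num

instance cubeMeasure_prob (d : ℕ) : IsProbabilityMeasure (cubeMeasure d) :=
  MeasureTheory.Measure.pi.instIsProbabilityMeasure _

instance sampleMeasure_prob (d n : ℕ) : IsProbabilityMeasure (sampleMeasure d n) :=
  MeasureTheory.Measure.pi.instIsProbabilityMeasure _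

instance pairMeasure_prob (d n : ℕ) : IsProbabilityMeasure (pairMeasure d n) := by
  unfold pairMeasure; infer_instance

/-- if the bottleneck matching weight exceeds `γ` with probability at most `p`,
then an independent `G(X_n; r)` is isomorphic to a subgraph of `G(X_n; r + 2γ)` with
probability at least `1 - p`. -/
theorem stmt5 (d n : ℕ) (hd : 1 ≤ d) (hn : 1 ≤ n) (r γ p : ℝ)
    (hr : 0 < r) (hγ : 0 < γ) (hp0 : 0 ≤ p) (hp1 : p ≤ 1)
    (hM : pairMeasure d n {q | γ < bottleneck q.1 q.2} ≤ ENNReal.ofReal p) :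
    ENNReal.ofReal (1 - p) ≤
      pairMeasure d n
        {q | IsSubgraphIso (geomGraph q.1 r) (geomGraph q.2 (r + 2 * γ))} := by
  set A : Set ((Fin n → Fin d → ℝ) × (Fin n → Fin d → ℝ)) :=
    {q | IsSubgraphIso (geomGraph q.1 r) (geomGraph q.2 (r + 2 * γ))}
  set B : Set ((Fin n → Fin d → ℝ) × (Fin n → Fin d → ℝ)) :=
    {q | γ < bottleneck q.1 q.2}
  have hsub : ∀ q, q ∉ B → q ∈ A := by
    rintro ⟨x, y⟩ hq
    have hb : bottleneck x y ≤ γ := le_of_not_gt hq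
    -- the infimum over the finite set of permutations is attained
    obtain ⟨φ, hφ⟩ := Finite.exists_min (fun φ : Equiv.Perm (Fin n) =>
      ⨆ i, eDist (x i) (y (φ i)))
    have hinf : bottleneck x y = ⨆ i, eDist (x i) (y (φ i)) := by
      refine le_antisymm (ciInf_le (Finite.bddBelow_range _) φ) (le_ciInf hφ)
    have hsup : (⨆ i, eDist (x i) (y (φ i))) ≤ γ := hinf ▸ hb
    have hpt : ∀ i, eDist (x i) (y (φ i)) ≤ γ := fun i =>
      le_trans (le_ciSup (f := fun i => eDist (x i) (y (φ i))) (Finite.bddAbove_range _) i) hsup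
    refine ⟨φ.toEmbedding, fun i j hij => ?_⟩
    refine ⟨fun h => hij.1 (φ.injective h), ?_⟩
    calc eDist (y (φ i)) (y (φ j))
        ≤ eDist (y (φ i)) (x i) + eDist (x i) (y (φ j)) := eDist_triangle _ _ _
      _ ≤ eDist (y (φ i)) (x i) + (eDist (x i) (x j) + eDist (x j) (y (φ j))) := by
          gcongr; exact eDist_triangle _ _ _
      _ ≤ γ + (r + γ) := by
          rw [eDist_comm (y (φ i))]
          gcongr
          · exact hpt i
          · exact hij.2
          · exact hpt j
      _ = r + 2 * γ := by ring
  have hcover : (Set.univ : Set ((Fin n → Fin d → ℝ) × (Fin n → Fin d → ℝ))) ⊆ A ∪ B := by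
    intro q _
    by_cases h : q ∈ B
    · exact Or.inr h
    · exact Or.inl (hsub q h)
  have h1 : (1 : ENNReal) ≤ pairMeasure d n A + pairMeasure d n B := by
    calc (1 : ENNReal) = pairMeasure d n Set.univ := (measure_univ).symm
      _ ≤ pairMeasure d n (A ∪ B) := measure_mono hcover
      _ ≤ pairMeasure d n A + pairMeasure d n B := measure_union_le _ _
  have : ENNReal.ofReal (1 - p) = 1 - ENNReal.ofReal p := by
    rw [ENNReal.ofReal_sub _ hp0, ENNReal.ofReal_one]
  rw [this]
  rw [tsub_le_iff_right]
  calc (1 : ENNReal) ≤ pairMeasure d n A + pairMeasure d n B := h1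
    _ ≤ pairMeasure d n A + ENNReal.ofReal p := by gcongr

end
end

section
/- Let d = 1 and let Π be the increasing property 'every vertex of G has degree at least |V(G)|/4'. There exist a constant c > 0 and n₀ such that for all n ≥ n₀ divisible by 4, r_Π(n, 1/2) ≤ 1/4 + c/√n. -/
open MeasureTheory Real

noncomputable section

/-! ### Auxiliary material for stmt8 -/

section Aux

open ProbabilityTheory Set Finset

instance : IsProbabilityMeasure (volume.restrict (Set.Icc (0:ℝ) 1)) :=
  ⟨by rw [Measure.restrict_apply_univ, Real.volume_Icc]; norm_num⟩

instance (d : ℕ) : IsProbabilityMeasure (cubeMeasure d) := by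
  unfold cubeMeasure; infer_instance

instance (d n : ℕ) : IsProbabilityMeasure (sampleMeasure d n) := by
  unfold sampleMeasure; infer_instance

/-- Marginal of a product of identical probability measures. -/
lemma pi_eval_marg {ι : Type*} [Fintype ι] [DecidableEq ι] {γ : Type*} [MeasurableSpace γ]
    (ν : Measure γ) [IsProbabilityMeasure ν] (i : ι) {s : Set γ} (hs : MeasurableSet s) :
    Measure.pi (fun _ : ι => ν) ((fun x => x i) ⁻¹' s) = ν s := by
  have h : ((fun x : ι → γ => x i) ⁻¹' s)
      = Set.pi Set.univ (Function.update (fun _ : ι => (Set.univ : Set γ)) i s) := by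
    rw [Set.univ_pi_update_univ (α := fun _ : ι => γ) i s]
  rw [h, Measure.pi_pi]
  rw [Finset.prod_eq_single i]
  · simp
  · intro j _ hj; simp [Function.update_of_ne hj]
  · intro h; exact absurd (Finset.mem_univ i) h

/-- Coordinates of a product of identical probability measures are independent. -/
lemma iIndepFun_eval {ι : Type*} [Fintype ι] [DecidableEq ι] {γ : Type*} [MeasurableSpace γ]
    (ν : Measure γ) [IsProbabilityMeasure ν] :
    iIndepFun (fun i (x : ι → γ) => x i)
      (Measure.pi fun _ => ν) := by
  rw [ProbabilityTheory.iIndepFun_iff_measure_inter_preimage_eq_mul]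
  intro S sets hsets
  have h1 : (⋂ i ∈ S, (fun x : ι → γ => x i) ⁻¹' sets i)
      = Set.pi Set.univ (fun i => if i ∈ S then sets i else Set.univ) := by
    ext x
    simp only [Set.mem_iInter, Set.mem_preimage, Set.mem_pi, Set.mem_univ, true_imp_iff]
    refine forall_congr' fun i => ?_
    split_ifs with h <;> simp [h]
  rw [h1, Measure.pi_pi]
  have h2 : ∀ i : ι, ν (if i ∈ S then sets i else Set.univ)
      = if i ∈ S then ν (sets i) else 1 := by
    intro i; split_ifs <;> simp
  rw [Finset.prod_congr rfl fun i _ => h2 i, Finset.prod_ite_mem, Finset.univ_inter]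
  exact (Finset.prod_congr rfl fun i hi => (pi_eval_marg ν i (hsets i hi)).symm)

/-- The count of points in an interval, as a real-valued random variable. -/
def intervalCount (n : ℕ) (a b : ℝ) (x : Fin n → Fin 1 → ℝ) : ℝ :=
  ∑ j : Fin n, if x j 0 ∈ Set.Icc a b then (1:ℝ) else 0

lemma intervalCount_eq_card (n : ℕ) (a b : ℝ) (x : Fin n → Fin 1 → ℝ) :
    intervalCount n a b x
      = ((Finset.univ.filter fun j : Fin n => x j 0 ∈ Set.Icc a b).card : ℝ) := by
  rw [intervalCount, Finset.card_filter]
  push_cast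
  rfl

lemma intervalCount_measurable (n : ℕ) (a b : ℝ) :
    Measurable (intervalCount n a b) := by
  apply Finset.measurable_sum
  intro j _
  exact Measurable.ite
    (((measurable_pi_apply (0 : Fin 1)).comp (measurable_pi_apply j)) measurableSet_Icc)
    measurable_const measurable_const

/-- Chebyshev bound for the count of points in a fixed subinterval of `[0,1]`
of length `1/4 + 2/√n`. -/
lemma count_bound (n : ℕ) (hn : 64 ≤ n) {a b : ℝ}
    (hJ : Set.Icc a b ⊆ Set.Icc (0:ℝ) 1)
    (hlen : b - a = 1/4 + 2 / Real.sqrt n) :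
    sampleMeasure 1 n {x | intervalCount n a b x ≤ (n:ℝ)/4}
      ≤ ENNReal.ofReal (1/16) := by
  have hn0 : (0:ℝ) < n := by positivity
  have hsq : (0:ℝ) < Real.sqrt n := Real.sqrt_pos.2 hn0
  have hab : a ≤ b := by nlinarith [Real.sqrt_nonneg (n:ℝ), div_pos (by norm_num : (0:ℝ)<2) hsq]
  set μ := sampleMeasure 1 n with hμ
  set p : ℝ := b - a with hp
  clear_value p
  have hp0 : 0 ≤ p := by rw [hp]; linarith
  -- the underlying indicator variables
  set B : Fin n → Set (Fin n → Fin 1 → ℝ) := fun j => {x | x j 0 ∈ Set.Icc a b} with hB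
  have hBmeas : ∀ j, MeasurableSet (B j) := fun j =>
    ((measurable_pi_apply (0 : Fin 1)).comp (measurable_pi_apply j)) measurableSet_Icc
  set f : Fin n → (Fin n → Fin 1 → ℝ) → ℝ :=
    fun j => (B j).indicator (fun _ => (1:ℝ)) with hf
  have hf2 : ∀ j, MemLp (f j) 2 μ := fun j => (memLp_const 1).indicator (hBmeas j)
  -- measure of B j
  have hmeasB : ∀ j, μ (B j) = ENNReal.ofReal p := by
    intro j
    have e1 : B j = (fun x : Fin n → Fin 1 → ℝ => x j) ⁻¹'
        ((fun y : Fin 1 → ℝ => y 0) ⁻¹' Set.Icc a b) := rfl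
    have hs1 : MeasurableSet ((fun y : Fin 1 → ℝ => y 0) ⁻¹' Set.Icc a b) :=
      (measurable_pi_apply (0 : Fin 1)) measurableSet_Icc
    rw [hp, e1, hμ, sampleMeasure, pi_eval_marg _ j hs1, cubeMeasure,
      pi_eval_marg _ (0 : Fin 1) measurableSet_Icc,
      Measure.restrict_apply measurableSet_Icc,
      Set.inter_eq_self_of_subset_left hJ, Real.volume_Icc]
  -- expectation of each f j
  have hEf : ∀ j, ∫ x, f j x ∂μ = p := by
    intro j
    rw [hf]
    rw [MeasureTheory.integral_indicator_const (1:ℝ) (hBmeas j), measureReal_def, hmeasB j,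
      ENNReal.toReal_ofReal hp0, smul_eq_mul, mul_one]
  -- sq of indicator
  have hfsq : ∀ j, (f j) ^ 2 = f j := by
    intro j; funext x
    rw [Pi.pow_apply]
    by_cases h : x ∈ B j <;> simp [hf, Set.indicator_apply, h]
  -- variance of each f j
  have hVf : ∀ j, variance (f j) μ = p - p ^ 2 := by
    intro j
    rw [variance_eq_sub (hf2 j), hfsq j]
    have h1 : μ[f j] = p := hEf j
    rw [h1]
  -- independence
  have hcoord : iIndepFun
      (fun j (x : Fin n → Fin 1 → ℝ) => x j) μ := by
    rw [hμ, sampleMeasure]; exact iIndepFun_eval _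
  set g : (Fin 1 → ℝ) → ℝ :=
    Set.indicator ((fun y : Fin 1 → ℝ => y 0) ⁻¹' Set.Icc a b) (fun _ => (1:ℝ)) with hg
  have hgmeas : Measurable g :=
    (measurable_const.indicator ((measurable_pi_apply (0 : Fin 1)) measurableSet_Icc))
  have hfg : ∀ j, f j = g ∘ (fun x : Fin n → Fin 1 → ℝ => x j) := by
    intro j; funext x; rfl
  have hIndf : iIndepFun f μ := by
    have := hcoord.comp (fun _ => g) (fun _ => hgmeas)
    convert this using 1
    exact funext hfg
  -- the sum
  set X : (Fin n → Fin 1 → ℝ) → ℝ := ∑ j : Fin n, f j with hX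
  have hX2 : MemLp X 2 μ := memLp_finset_sum' _ (fun j _ => hf2 j)
  have hXeq : ∀ x, X x = intervalCount n a b x := by
    intro x
    rw [hX, intervalCount, Finset.sum_apply]
    exact Finset.sum_congr rfl fun j _ => by simp [hf, Set.indicator_apply, hB]
  have hEX : μ[X] = n * p := by
    rw [hX]
    have : μ[∑ j : Fin n, f j] = ∑ j : Fin n, μ[f j] := by
      simp only [Finset.sum_apply]
      exact MeasureTheory.integral_finset_sum _ fun j _ => (hf2 j).integrable one_le_two
    rw [this]
    simp [hEf, Finset.sum_const, nsmul_eq_mul]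
  have hVX : variance X μ = n * (p - p ^ 2) := by
    rw [hX, IndepFun.variance_sum (fun j _ => hf2 j)
      (fun i _ j _ hij => hIndf.indepFun hij)]
    simp [hVf, Finset.sum_const, nsmul_eq_mul]
    ring
  -- Chebyshev
  have hc : (0:ℝ) < 2 * Real.sqrt n := by positivity
  have hcheb := meas_ge_le_variance_div_sq (μ := μ) hX2 hc
  have hEXval : μ[X] = (n:ℝ)/4 + 2 * Real.sqrt n := by
    rw [hEX, hlen]
    have hns : (n:ℝ) = Real.sqrt n * Real.sqrt n := (Real.mul_self_sqrt hn0.le).symm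
    field_simp
    nlinarith [Real.mul_self_sqrt hn0.le]
  have hsubset : {x | intervalCount n a b x ≤ (n:ℝ)/4}
      ⊆ {x | 2 * Real.sqrt n ≤ |X x - μ[X]|} := by
    intro x hx
    simp only [Set.mem_setOf_eq] at hx ⊢
    rw [hXeq x, hEXval]
    rw [abs_sub_comm, le_abs]
    left
    linarith
  refine le_trans (measure_mono hsubset) (le_trans hcheb ?_)
  apply ENNReal.ofReal_le_ofReal
  have hVle : variance X μ ≤ (n:ℝ)/4 := by
    rw [hVX]; nlinarith [sq_nonneg (p - 1/2), hn0]
  have hc2 : (2 * Real.sqrt n) ^ 2 = 4 * n := by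
    rw [mul_pow, Real.sq_sqrt hn0.le]; ring
  rw [hc2]
  rw [div_le_iff₀ (by positivity)]
  nlinarith

/-- Deterministic degree bound: if `x v 0` lies in an interval of length at most `r`
that contains at least `m + 1` of the points, then `v` has degree at least `m`. -/
lemma deg_helper {n : ℕ} (x : Fin n → Fin 1 → ℝ) {r aa bb : ℝ} (hr : bb - aa ≤ r) (m : ℕ)
    (v : Fin n) (hv : x v 0 ∈ Set.Icc aa bb)
    (hcount : m + 1 ≤ (Finset.univ.filter fun j : Fin n => x j 0 ∈ Set.Icc aa bb).card) :
    (m : ℝ) ≤ (((geomGraph x r).neighborSet v).ncard : ℝ) := by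
  classical
  set S := Finset.univ.filter fun j : Fin n => x j 0 ∈ Set.Icc aa bb with hS
  have hvS : v ∈ S := Finset.mem_filter.2 ⟨Finset.mem_univ v, hv⟩
  have hsub : ↑(S.erase v) ⊆ (geomGraph x r).neighborSet v := by
    intro j hj
    simp only [Finset.coe_erase, Set.mem_diff, Finset.mem_coe, Set.mem_singleton_iff] at hj
    obtain ⟨hjS, hjv⟩ := hj
    have hjI : x j 0 ∈ Set.Icc aa bb := (Finset.mem_filter.1 hjS).2
    have hdist : eDist (x v) (x j) ≤ r := by
      unfold eDist
      rw [Fin.sum_univ_one, Real.sqrt_sq_eq_abs]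
      have h1 := hv.1; have h2 := hv.2; have h3 := hjI.1; have h4 := hjI.2
      rw [abs_le]
      constructor <;> linarith
    exact (show v ≠ j ∧ eDist (x v) (x j) ≤ r from ⟨fun h => hjv (h.symm), hdist⟩)
  have hcard : m ≤ (S.erase v).card := by
    rw [Finset.card_erase_of_mem hvS]; omega
  have hn : m ≤ ((geomGraph x r).neighborSet v).ncard := by
    calc m ≤ (S.erase v).card := hcard
    _ = (↑(S.erase v) : Set (Fin n)).ncard := (Set.ncard_coe_finset _).symm
    _ ≤ ((geomGraph x r).neighborSet v).ncard :=
        Set.ncard_le_ncard hsub (Set.toFinite _)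
  exact_mod_cast hn

end Aux

/-- in dimension `d = 1`, for the property "minimum degree at least `|V|/4`",
for large `n` divisible by 4, `r_Π(n, 1/2) ≤ 1/4 + c/√n`. -/
theorem stmt8 :
    ∃ c : ℝ, 0 < c ∧ ∃ n₀ : ℕ, ∀ n : ℕ, n₀ ≤ n → 4 ∣ n →
      thresholdRadius 1 n minDegProp (1 / 2) ≤ 1 / 4 + c / Real.sqrt n := by
  classical
  refine ⟨2, by norm_num, 64, fun n hn hdvd => ?_⟩
  obtain ⟨m, hm⟩ := hdvd
  have hn0 : (0:ℝ) < n := by positivity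
  have hn64 : (64:ℝ) ≤ n := by exact_mod_cast hn
  have hsq8 : (8:ℝ) ≤ Real.sqrt n := by
    have : Real.sqrt 64 ≤ Real.sqrt n := Real.sqrt_le_sqrt hn64
    rwa [show (64:ℝ) = 8 ^ 2 by norm_num, Real.sqrt_sq (by norm_num : (0:ℝ) ≤ 8)] at this
  have hsq0 : (0:ℝ) < Real.sqrt n := by linarith
  set s : ℝ := 2 / Real.sqrt n with hs
  have hs0 : 0 < s := by positivity
  have hs14 : s ≤ 1/4 := by
    rw [hs, div_le_iff₀ hsq0]; linarith
  set r : ℝ := 1/4 + s with hr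
  have hr0 : 0 < r := by positivity
  -- the four intervals
  set a : Fin 4 → ℝ := ![0, 1/4 - s, 1/2 - s, 3/4 - s] with ha
  have haval : a 0 = 0 ∧ a 1 = 1/4 - s ∧ a 2 = 1/2 - s ∧ a 3 = 3/4 - s := by
    refine ⟨rfl, rfl, rfl, rfl⟩
  clear_value s r
  have hJsub : ∀ k : Fin 4, Set.Icc (a k) (a k + r) ⊆ Set.Icc (0:ℝ) 1 := by
    intro k
    have hav := haval
    obtain ⟨h0, h1, h2, h3⟩ := hav
    fin_cases k <;> apply Set.Icc_subset_Icc <;> simp [ha] <;> linarith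
  -- bad events
  set bad : Fin 4 → Set (Fin n → Fin 1 → ℝ) :=
    fun k => {x | intervalCount n (a k) (a k + r) x ≤ (n:ℝ)/4} with hbad
  have hbadmeas : ∀ k, MeasurableSet (bad k) := fun k =>
    measurableSet_le (intervalCount_measurable n _ _) measurable_const
  have hbadle : ∀ k, sampleMeasure 1 n (bad k) ≤ ENNReal.ofReal (1/16) := by
    intro k
    exact count_bound n hn (hJsub k) (by rw [hr, hs]; ring)
  set allIn : Set (Fin n → Fin 1 → ℝ) := {x | ∀ j, x j 0 ∈ Set.Icc (0:ℝ) 1} with hallIn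
  -- allIn has full measure
  have hallIn0 : sampleMeasure 1 n allInᶜ = 0 := by
    have hsub : allInᶜ ⊆ ⋃ j : Fin n, {x : Fin n → Fin 1 → ℝ | x j 0 ∉ Set.Icc (0:ℝ) 1} := by
      intro x hx
      simp only [hallIn, Set.mem_compl_iff, Set.mem_setOf_eq, not_forall] at hx
      obtain ⟨j, hj⟩ := hx
      exact Set.mem_iUnion.2 ⟨j, hj⟩
    refine measure_mono_null hsub (measure_iUnion_null fun j => ?_)
    have e1 : {x : Fin n → Fin 1 → ℝ | x j 0 ∉ Set.Icc (0:ℝ) 1}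
        = (fun x : Fin n → Fin 1 → ℝ => x j) ⁻¹'
          ((fun y : Fin 1 → ℝ => y 0) ⁻¹' (Set.Icc (0:ℝ) 1)ᶜ) := rfl
    rw [e1, sampleMeasure]
    apply Measure.pi_eval_preimage_null
    rw [cubeMeasure]
    apply Measure.pi_eval_preimage_null
    rw [Measure.restrict_apply (measurableSet_Icc.compl), Set.compl_inter_self]
    exact measure_empty
  -- the good event implies the degree property
  have hgood : (⋃ k, bad k)ᶜ ∩ allIn ⊆ {x | minDegProp n (geomGraph x r)} := by
    intro x hx
    obtain ⟨hg, hin⟩ := hx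
    rw [Set.mem_compl_iff, Set.mem_iUnion, not_exists] at hg
    intro v
    have hv01 : x v 0 ∈ Set.Icc (0:ℝ) 1 := hin v
    -- find k such that x v 0 ∈ Icc (a k) (a k + r)
    have hcover : ∃ k : Fin 4, x v 0 ∈ Set.Icc (a k) (a k + r) := by
      obtain ⟨h0, h1⟩ := hv01
      obtain ⟨h0v, h1v, h2v, h3v⟩ := haval
      rcases le_or_gt (x v 0) (1/4) with h | h
      · exact ⟨0, by rw [Set.mem_Icc, h0v]; constructor <;> linarith⟩
      rcases le_or_gt (x v 0) (1/2) with h' | h'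
      · exact ⟨1, by rw [Set.mem_Icc, h1v]; constructor <;> linarith⟩
      rcases le_or_gt (x v 0) (3/4) with h'' | h''
      · exact ⟨2, by rw [Set.mem_Icc, h2v]; constructor <;> linarith⟩
      · exact ⟨3, by rw [Set.mem_Icc, h3v]; constructor <;> linarith⟩
    obtain ⟨k, hk⟩ := hcover
    have hcount : (n:ℝ)/4 < intervalCount n (a k) (a k + r) x := by
      have := hg k
      rw [hbad, Set.mem_setOf_eq, not_le] at this
      exact this
    have hcount' : m + 1 ≤
        (Finset.univ.filter fun j : Fin n => x j 0 ∈ Set.Icc (a k) (a k + r)).card := by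
      have hmr : ((n:ℝ))/4 = (m:ℝ) := by
        rw [hm]; push_cast; ring
      rw [intervalCount_eq_card, hmr] at hcount
      exact_mod_cast Nat.lt_iff_add_one_le.1 (by exact_mod_cast hcount)
    have hdeg := deg_helper x (show (a k + r) - a k ≤ r from le_of_eq (by ring)) m v hk hcount'
    have hnm : ((n:ℕ):ℝ)/4 = (m:ℝ) := by rw [hm]; push_cast; ring
    rw [hnm]
    exact hdeg
  -- probability bound
  have hUnion : sampleMeasure 1 n (⋃ k, bad k) ≤ ENNReal.ofReal (1/4) := by
    calc sampleMeasure 1 n (⋃ k, bad k) ≤ ∑ k : Fin 4, sampleMeasure 1 n (bad k) :=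
          measure_iUnion_fintype_le _ _
    _ ≤ ∑ _k : Fin 4, ENNReal.ofReal (1/16) := Finset.sum_le_sum fun k _ => hbadle k
    _ = ENNReal.ofReal (1/4) := by
        rw [Finset.sum_const, Finset.card_univ, Fintype.card_fin, nsmul_eq_mul]
        rw [show ((4:ℕ) : ENNReal) = ENNReal.ofReal 4 by simp]
        rw [← ENNReal.ofReal_mul (by norm_num)]
        norm_num
  have hgoodmeas : MeasurableSet (⋃ k, bad k) := MeasurableSet.iUnion fun k => hbadmeas k
  have hcompl : ENNReal.ofReal (1/2) ≤ sampleMeasure 1 n (⋃ k, bad k)ᶜ := by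
    rw [measure_compl hgoodmeas (measure_ne_top _ _), measure_univ]
    refine ENNReal.le_sub_of_add_le_right (measure_ne_top _ _) ?_
    calc ENNReal.ofReal (1/2) + sampleMeasure 1 n (⋃ k, bad k)
        ≤ ENNReal.ofReal (1/2) + ENNReal.ofReal (1/4) := add_le_add le_rfl hUnion
    _ = ENNReal.ofReal (3/4) := by rw [← ENNReal.ofReal_add (by norm_num) (by norm_num)]; norm_num
    _ ≤ 1 := by
        rw [← ENNReal.ofReal_one]
        exact ENNReal.ofReal_le_ofReal (by norm_num)
  -- conclude membership in the threshold set
  have hmem : r ∈ {ρ : ℝ | 0 < ρ ∧ ENNReal.ofReal (1/2) ≤ geomProb 1 n minDegProp ρ} := by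
    refine ⟨hr0, ?_⟩
    rw [geomProb]
    calc ENNReal.ofReal (1/2) ≤ sampleMeasure 1 n (⋃ k, bad k)ᶜ := hcompl
    _ = sampleMeasure 1 n ((⋃ k, bad k)ᶜ ∩ allIn) := (measure_inter_conull hallIn0).symm
    _ ≤ sampleMeasure 1 n {x | minDegProp n (geomGraph x r)} := measure_mono hgood
  have hbdd : BddBelow {ρ : ℝ | 0 < ρ ∧ ENNReal.ofReal (1/2) ≤ geomProb 1 n minDegProp ρ} :=
    ⟨0, fun y hy => le_of_lt hy.1⟩
  have hre : r = 1/4 + 2 / Real.sqrt n := by rw [hr, hs]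
  rw [thresholdRadius]
  exact csInf_le hbdd hmem

end
end

section
/- There exist constants c > 0 and c′ > 0 such that for every β > 0 and every n ≥ 1, P{M_n^{(1)} ≥ β/√n} ≤ c′·exp(−c·β²). -/
open MeasureTheory Real

noncomputable section

instance : IsProbabilityMeasure (volume.restrict (Set.Icc (0 : ℝ) 1)) :=
  ⟨by simp [Real.volume_Icc]⟩

instance inst_s10 (d : ℕ) : IsProbabilityMeasure (cubeMeasure d) := by
  unfold cubeMeasure; infer_instance

instance inst_s10_2 (d n : ℕ) : IsProbabilityMeasure (sampleMeasure d n) := by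
  unfold sampleMeasure; infer_instance

instance (d n : ℕ) : IsProbabilityMeasure (pairMeasure d n) := by
  unfold pairMeasure; infer_instance

/-- product lemma for lintegral over an iid pi measure -/
lemma lintegral_pi_pow {α : Type*} [MeasurableSpace α] (μ : Measure α) [SigmaFinite μ]
    (f : α → ENNReal) (hf : Measurable f) (n : ℕ) :
    ∫⁻ x : Fin n → α, ∏ j, f (x j) ∂(Measure.pi fun _ => μ) = (∫⁻ a, f a ∂μ) ^ n := by
  induction n with
  | zero =>
      simp [Measure.pi_univ]
  | succ n ih =>
      have hmp := (measurePreserving_piFinSuccAbove (fun _ : Fin (n+1) => μ) 0)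
      have hG : Measurable fun z : α × (Fin n → α) => f z.1 * ∏ j, f (z.2 j) := by
        apply Measurable.mul (hf.comp measurable_fst)
        exact Finset.measurable_prod _ fun j _ =>
          hf.comp ((measurable_pi_apply j).comp measurable_snd)
      have key : ∫⁻ z : α × (Fin n → α), f z.1 * ∏ j, f (z.2 j)
          ∂(μ.prod (Measure.pi fun _ : Fin n => μ))
          = ∫⁻ x : Fin (n+1) → α,
              f ((MeasurableEquiv.piFinSuccAbove (fun _ : Fin (n+1) => α) 0) x).1 *
              ∏ j, f (((MeasurableEquiv.piFinSuccAbove (fun _ : Fin (n+1) => α) 0) x).2 j)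
              ∂(Measure.pi fun _ => μ) := by
        have := lintegral_map hG
          (MeasurableEquiv.piFinSuccAbove (fun _ : Fin (n+1) => α) 0).measurable
          (μ := Measure.pi fun _ => μ)
        rw [hmp.map_eq] at this
        exact this
      calc ∫⁻ x : Fin (n+1) → α, ∏ j, f (x j) ∂(Measure.pi fun _ => μ)
          = ∫⁻ x : Fin (n+1) → α,
              f ((MeasurableEquiv.piFinSuccAbove (fun _ : Fin (n+1) => α) 0) x).1 *
              ∏ j, f (((MeasurableEquiv.piFinSuccAbove (fun _ : Fin (n+1) => α) 0) x).2 j)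
              ∂(Measure.pi fun _ => μ) := by
            refine lintegral_congr fun x => ?_
            simp only [MeasurableEquiv.piFinSuccAbove_apply]
            rw [Fin.prod_univ_succ]
            rfl
        _ = ∫⁻ z : α × (Fin n → α), f z.1 * ∏ j, f (z.2 j)
              ∂(μ.prod (Measure.pi fun _ : Fin n => μ)) := key.symm
        _ = (∫⁻ a, f a ∂μ) * (∫⁻ a, f a ∂μ) ^ n := by
            rw [lintegral_prod_mul (f:=f) (g:=fun y : Fin n → α => ∏ j, f (y j)) hf.aemeasurable
              (Finset.measurable_prod Finset.univ (fun (j : Fin n) _ =>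
                hf.comp (measurable_pi_apply j))).aemeasurable, ih]
        _ = (∫⁻ a, f a ∂μ) ^ (n+1) := by ring

/-- number of points in `(a, b]` -/
def cnt {n : ℕ} (a b : ℝ) (x : Fin n → Fin 1 → ℝ) : ℝ :=
  ∑ j, if x j 0 ∈ Set.Ioc a b then (1:ℝ) else 0

/-- number of points `≤ s` -/
def cle {n : ℕ} (s : ℝ) (x : Fin n → Fin 1 → ℝ) : ℝ :=
  ∑ j, if x j 0 ≤ s then (1:ℝ) else 0

lemma measurableSet_ptIoc (a b : ℝ) :
    MeasurableSet {v : Fin 1 → ℝ | v 0 ∈ Set.Ioc a b} :=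
  (measurable_pi_apply 0) measurableSet_Ioc

lemma cube_Ioc (a b : ℝ) (h0 : 0 ≤ a) (hab : a ≤ b) (hb : b ≤ 1) :
    cubeMeasure 1 {v : Fin 1 → ℝ | v 0 ∈ Set.Ioc a b} = ENNReal.ofReal (b - a) := by
  have hset : {v : Fin 1 → ℝ | v 0 ∈ Set.Ioc a b}
      = Set.pi Set.univ (fun _ : Fin 1 => Set.Ioc a b) := by
    ext v
    simp only [Set.mem_setOf_eq, Set.mem_univ_pi]
    exact ⟨fun h i => by rwa [Subsingleton.elim i 0], fun h => h 0⟩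
  rw [hset]
  unfold cubeMeasure
  rw [Measure.pi_pi]
  rw [Fin.prod_univ_one]
  rw [Measure.restrict_apply measurableSet_Ioc]
  rw [Set.inter_eq_left.2 ((Set.Ioc_subset_Icc_self).trans (Set.Icc_subset_Icc h0 hb))]
  rw [Real.volume_Ioc]

lemma real_mgf (p lam : ℝ) (hp0 : 0 ≤ p) (hlam : |lam| ≤ 1) :
    exp (lam * (1 - p)) * p + exp (lam * (0 - p)) * (1 - p) ≤ exp (p * lam ^ 2) := by
  have key : exp lam ≤ 1 + lam + lam ^ 2 := by
    have h := Real.exp_bound (x := lam) hlam (n := 2) (by norm_num)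
    have h2 := (abs_le.1 h).2
    have hs : ∑ i ∈ Finset.range 2, lam ^ i / (Nat.factorial i) = 1 + lam := by
      norm_num [Finset.sum_range_succ]
    rw [hs] at h2
    norm_num [Nat.factorial] at h2
    nlinarith [sq_abs lam]
  have e1 : exp (lam * (1 - p)) = exp lam * exp (-(lam * p)) := by
    rw [← Real.exp_add]; ring_nf
  have e2 : exp (lam * (0 - p)) = exp (-(lam * p)) := by ring_nf
  rw [e1, e2]
  have h1 : exp lam * exp (-(lam * p)) * p + exp (-(lam * p)) * (1 - p)
      = exp (-(lam * p)) * (1 + p * (exp lam - 1)) := by ring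
  rw [h1]
  have h2 : 1 + p * (exp lam - 1) ≤ exp (p * (exp lam - 1)) := by
    have := Real.add_one_le_exp (p * (exp lam - 1)); linarith
  calc exp (-(lam * p)) * (1 + p * (exp lam - 1))
      ≤ exp (-(lam * p)) * exp (p * (exp lam - 1)) :=
        mul_le_mul_of_nonneg_left h2 (exp_pos _).le
    _ = exp (p * (exp lam - 1 - lam)) := by rw [← Real.exp_add]; ring_nf
    _ ≤ exp (p * lam ^ 2) := by
        apply Real.exp_le_exp.2
        apply mul_le_mul_of_nonneg_left _ hp0
        nlinarith [key]

lemma mgf_pt (a b lam : ℝ) (h0 : 0 ≤ a) (hab : a ≤ b) (hb : b ≤ 1) (hlam : |lam| ≤ 1) :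
    ∫⁻ v : Fin 1 → ℝ,
        ENNReal.ofReal (exp (lam * ((if v 0 ∈ Set.Ioc a b then (1:ℝ) else 0) - (b - a))))
        ∂(cubeMeasure 1)
      ≤ ENNReal.ofReal (exp ((b - a) * lam ^ 2)) := by
  set p := b - a with hp
  set A := {v : Fin 1 → ℝ | v 0 ∈ Set.Ioc a b} with hA
  have hAm := measurableSet_ptIoc a b
  set c1 : ENNReal := ENNReal.ofReal (exp (lam * (1 - p))) with hc1
  set c2 : ENNReal := ENNReal.ofReal (exp (lam * (0 - p))) with hc2
  have hfun : (fun v : Fin 1 → ℝ =>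
      ENNReal.ofReal (exp (lam * ((if v 0 ∈ Set.Ioc a b then (1:ℝ) else 0) - p))))
      = fun v => A.indicator (fun _ => c1) v + Aᶜ.indicator (fun _ => c2) v := by
    funext v
    by_cases h : v ∈ A
    · have h' : v 0 ∈ Set.Ioc a b := h
      rw [if_pos h', Set.indicator_of_mem h, Set.indicator_of_notMem (by simp [h]), add_zero]
    · have h' : ¬ (v 0 ∈ Set.Ioc a b) := h
      rw [if_neg h', Set.indicator_of_notMem h,
        Set.indicator_of_mem (Set.mem_compl h), zero_add]
  rw [hfun]
  rw [lintegral_add_left ((measurable_const (a := c1)).indicator hAm)]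
  rw [lintegral_indicator_const hAm, lintegral_indicator_const hAm.compl]
  have hμA : cubeMeasure 1 A = ENNReal.ofReal p := cube_Ioc a b h0 hab hb
  have hμAc : cubeMeasure 1 Aᶜ = ENNReal.ofReal (1 - p) := by
    rw [measure_compl hAm (measure_ne_top _ _), hμA, measure_univ]
    rw [← ENNReal.ofReal_one, ← ENNReal.ofReal_sub _ (by linarith : (0:ℝ) ≤ p)]
  rw [hμA, hμAc, hc1, hc2]
  rw [← ENNReal.ofReal_mul (exp_pos _).le, ← ENNReal.ofReal_mul (exp_pos _).le,
    ← ENNReal.ofReal_add (mul_nonneg (exp_pos _).le (by linarith))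
      (mul_nonneg (exp_pos _).le (by linarith))]
  exact ENNReal.ofReal_le_ofReal (real_mgf p lam (by linarith) hlam)

lemma measurable_cnt {n : ℕ} (a b : ℝ) : Measurable fun x : Fin n → Fin 1 → ℝ => cnt a b x := by
  apply Finset.measurable_sum
  intro j _
  apply Measurable.ite _ measurable_const measurable_const
  exact (measurable_pi_apply 0).comp (measurable_pi_apply j) measurableSet_Ioc

lemma chernoff_core (n : ℕ) (a b lam t : ℝ) (h0 : 0 ≤ a) (hab : a ≤ b) (hb : b ≤ 1)
    (hlam : |lam| ≤ 1) :
    sampleMeasure 1 n {x | (n : ℝ) * t ≤ lam * (cnt a b x - n * (b - a))}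
      ≤ ENNReal.ofReal (exp ((n : ℝ) * ((b - a) * lam ^ 2 - t))) := by
  set p := b - a with hp
  set fpt : (Fin 1 → ℝ) → ENNReal := fun v =>
    ENNReal.ofReal (exp (lam * ((if v 0 ∈ Set.Ioc a b then (1:ℝ) else 0) - p))) with hfpt
  have hfptm : Measurable fpt := by
    apply ENNReal.measurable_ofReal.comp
    apply Real.measurable_exp.comp
    apply Measurable.const_mul
    apply Measurable.sub _ measurable_const
    exact Measurable.ite ((measurable_pi_apply 0) measurableSet_Ioc)
      measurable_const measurable_const
  set F : (Fin n → Fin 1 → ℝ) → ENNReal := fun x => ∏ j, fpt (x j) with hF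
  have hFm : Measurable F :=
    Finset.measurable_prod Finset.univ fun j _ => hfptm.comp (measurable_pi_apply j)
  have hFeq : ∀ x, F x = ENNReal.ofReal (exp (lam * (cnt a b x - n * p))) := by
    intro x
    have h1 : cnt a b x - n * p = ∑ j, ((if x j 0 ∈ Set.Ioc a b then (1:ℝ) else 0) - p) := by
      rw [Finset.sum_sub_distrib, Finset.sum_const, Finset.card_univ, Fintype.card_fin]
      unfold cnt; ring
    rw [h1, Finset.mul_sum, Real.exp_sum, ENNReal.ofReal_prod_of_nonneg
      (fun j _ => (exp_pos _).le)]
  have hincl : {x : Fin n → Fin 1 → ℝ | (n : ℝ) * t ≤ lam * (cnt a b x - n * p)}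
      ⊆ {x | ENNReal.ofReal (exp ((n : ℝ) * t)) ≤ F x} := by
    intro x hx
    rw [Set.mem_setOf_eq, hFeq x]
    exact ENNReal.ofReal_le_ofReal (Real.exp_le_exp.2 hx)
  have hmarkov := mul_meas_ge_le_lintegral₀ hFm.aemeasurable
    (ENNReal.ofReal (exp ((n : ℝ) * t))) (μ := sampleMeasure 1 n)
  have hprod : ∫⁻ x, F x ∂(sampleMeasure 1 n) = (∫⁻ v, fpt v ∂(cubeMeasure 1)) ^ n := by
    exact lintegral_pi_pow (cubeMeasure 1) fpt hfptm n
  have hpt : ∫⁻ v, fpt v ∂(cubeMeasure 1) ≤ ENNReal.ofReal (exp (p * lam ^ 2)) :=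
    mgf_pt a b lam h0 hab hb hlam
  have hbound : ∫⁻ x, F x ∂(sampleMeasure 1 n)
      ≤ ENNReal.ofReal (exp ((n:ℝ) * (p * lam ^ 2))) := by
    rw [hprod]
    calc (∫⁻ v, fpt v ∂(cubeMeasure 1)) ^ n ≤ (ENNReal.ofReal (exp (p * lam ^ 2))) ^ n :=
          pow_le_pow_left' hpt n
      _ = ENNReal.ofReal (exp (p * lam ^ 2) ^ n) := (ENNReal.ofReal_pow (exp_pos _).le n).symm
      _ = ENNReal.ofReal (exp ((n:ℝ) * (p * lam ^ 2))) := by rw [← Real.exp_nat_mul]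
  have hc0 : (ENNReal.ofReal (exp ((n : ℝ) * t))) ≠ 0 :=
    (ENNReal.ofReal_pos.2 (exp_pos _)).ne'
  have hctop : (ENNReal.ofReal (exp ((n : ℝ) * t))) ≠ ⊤ := ENNReal.ofReal_ne_top
  calc sampleMeasure 1 n {x | (n : ℝ) * t ≤ lam * (cnt a b x - n * p)}
      ≤ sampleMeasure 1 n {x | ENNReal.ofReal (exp ((n : ℝ) * t)) ≤ F x} :=
        measure_mono hincl
    _ ≤ (∫⁻ x, F x ∂(sampleMeasure 1 n)) / ENNReal.ofReal (exp ((n : ℝ) * t)) := by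
        rw [ENNReal.le_div_iff_mul_le (Or.inl hc0) (Or.inl hctop)]
        rw [mul_comm]
        exact hmarkov
    _ ≤ ENNReal.ofReal (exp ((n:ℝ) * (p * lam ^ 2))) / ENNReal.ofReal (exp ((n : ℝ) * t)) :=
        ENNReal.div_le_div_right hbound _
    _ = ENNReal.ofReal (exp ((n : ℝ) * (p * lam ^ 2 - t))) := by
        rw [← ENNReal.ofReal_div_of_pos (exp_pos _), ← Real.exp_sub]
        ring_nf

def dev {n : ℕ} (a b : ℝ) (x : Fin n → Fin 1 → ℝ) : ℝ :=
  cnt a b x - n * (b - a)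

def Supp {n : ℕ} (x : Fin n → Fin 1 → ℝ) : Prop :=
  ∀ j, x j 0 ∈ Set.Ioc (0:ℝ) 1

def GoodS {n : ℕ} (ε : ℝ) (x : Fin n → Fin 1 → ℝ) : Prop :=
  ∀ s ∈ Set.Icc (0:ℝ) 1, |cle s x - n * s| ≤ n * ε

lemma cnt_add {n : ℕ} (a b c : ℝ) (hab : a ≤ b) (hbc : b ≤ c) (x : Fin n → Fin 1 → ℝ) :
    cnt a b x + cnt b c x = cnt a c x := by
  unfold cnt
  rw [← Finset.sum_add_distrib]
  refine Finset.sum_congr rfl fun j _ => ?_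
  simp only [Set.mem_Ioc]
  rcases (le_or_gt (x j 0) a) with h|h
  · rw [if_neg (by intro hh; linarith [hh.1]), if_neg (by intro hh; linarith [hh.1]),
      if_neg (by intro hh; linarith [hh.1]), add_zero]
  rcases (le_or_gt (x j 0) b) with h2|h2
  · rw [if_pos ⟨h, h2⟩, if_neg (by intro hh; linarith [hh.1]), if_pos ⟨h, h2.trans hbc⟩, add_zero]
  rcases (le_or_gt (x j 0) c) with h3|h3
  · rw [if_neg (by intro hh; linarith [hh.2]), if_pos ⟨h2, h3⟩,
      if_pos ⟨hab.trans_lt h2, h3⟩, zero_add]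
  · rw [if_neg (by intro hh; linarith [hh.2]), if_neg (by intro hh; linarith [hh.2]),
      if_neg (by intro hh; linarith [hh.2]), add_zero]

lemma dev_add {n : ℕ} (a b c : ℝ) (hab : a ≤ b) (hbc : b ≤ c) (x : Fin n → Fin 1 → ℝ) :
    dev a b x + dev b c x = dev a c x := by
  unfold dev
  rw [show cnt a b x - ↑n * (b - a) + (cnt b c x - ↑n * (c - b))
    = (cnt a b x + cnt b c x) - ↑n * (c - a) by ring, cnt_add a b c hab hbc x]

lemma cnt_zero {n : ℕ} (a : ℝ) (x : Fin n → Fin 1 → ℝ) : cnt a a x = 0 := by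
  unfold cnt
  refine Finset.sum_eq_zero fun j _ => ?_
  simp [Set.mem_Ioc]

lemma cnt_full {n : ℕ} (x : Fin n → Fin 1 → ℝ) (hs : Supp x) : cnt 0 1 x = n := by
  unfold cnt
  have h : cnt 0 1 x = ∑ _j : Fin n, (1:ℝ) := Finset.sum_congr rfl fun j _ => if_pos (hs j)
  unfold cnt at h
  rw [h, Finset.sum_const, Finset.card_univ, Fintype.card_fin, nsmul_eq_mul, mul_one]

/-- deterministic chaining bound -/
lemma chain {n : ℕ} (x : Fin n → Fin 1 → ℝ) (hs : Supp x) (t : ℕ → ℝ) (ht : ∀ l, 0 ≤ t l)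
    (L : ℕ)
    (H : ∀ l ∈ Finset.Icc 1 L, ∀ k : ℕ, k ∈ Finset.Icc 1 (2^l) →
      |dev (((k:ℝ)-1)/2^l) ((k:ℝ)/2^l) x| < n * t l) :
    ∀ k : ℕ, k ≤ 2^L → |dev 0 ((k:ℝ)/2^L) x| ≤ n * ∑ l ∈ Finset.Icc 1 L, t l := by
  induction L with
  | zero =>
      intro k hk
      interval_cases k
      · simp [dev, cnt_zero]
      · have : ((1:ℕ):ℝ)/2^0 = 1 := by norm_num
        rw [this, show (Finset.Icc 1 0) = ∅ by rfl]
        simp [dev, cnt_full x hs]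
  | succ L ih =>
      have Hsub : ∀ l ∈ Finset.Icc 1 L, ∀ k : ℕ, k ∈ Finset.Icc 1 (2^l) →
          |dev (((k:ℝ)-1)/2^l) ((k:ℝ)/2^l) x| < n * t l := by
        intro l hl k hk
        exact H l (Finset.mem_Icc.2 ⟨(Finset.mem_Icc.1 hl).1, (Finset.mem_Icc.1 hl).2.trans (Nat.le_succ L)⟩) k hk
      have ihL := ih Hsub
      have hsum : ∑ l ∈ Finset.Icc 1 (L+1), t l = (∑ l ∈ Finset.Icc 1 L, t l) + t (L+1) :=
        Finset.sum_Icc_succ_top (Nat.one_le_iff_ne_zero.2 (Nat.succ_ne_zero L)) t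
      intro k hk
      rcases Nat.even_or_odd k with ⟨m, hm⟩ | ⟨m, hm⟩
      · -- k = 2m
        subst hm
        have hm2 : m ≤ 2^L := by
          have : 2*m ≤ 2*2^L := by rw [← pow_succ']; omega
          omega
        have hcast : ((m + m : ℕ):ℝ)/2^(L+1) = (m:ℝ)/2^L := by
          push_cast [pow_succ]
          field_simp
          ring
        rw [hcast]
        refine (ihL m hm2).trans ?_
        rw [hsum]
        have : (0:ℝ) ≤ t (L+1) := ht _
        have hn : (0:ℝ) ≤ n := Nat.cast_nonneg n
        nlinarith
      · -- k = 2m+1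
        subst hm
        have hm2 : m ≤ 2^L := by
          have : 2*m + 1 ≤ 2*2^L := by rw [← pow_succ']; omega
          omega
        have hmid : ((2*m+1:ℕ):ℝ)/2^(L+1) - 1/2^(L+1) = (m:ℝ)/2^L := by
          push_cast [pow_succ]
          field_simp
          ring
        have hsplit : dev 0 (((2*m+1:ℕ):ℝ)/2^(L+1)) x
            = dev 0 ((m:ℝ)/2^L) x
              + dev ((((2*m+1:ℕ):ℝ)-1)/2^(L+1)) (((2*m+1:ℕ):ℝ)/2^(L+1)) x := by
          rw [← dev_add 0 ((m:ℝ)/2^L) (((2*m+1:ℕ):ℝ)/2^(L+1)) (by positivity) ?_ x]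
          · congr 2
            push_cast [pow_succ]
            field_simp
            ring
          · rw [← hmid]
            have : (0:ℝ) < 1/2^(L+1) := by positivity
            linarith
        rw [hsplit]
        have h1 := ihL m hm2
        have h2 := H (L+1) (Finset.mem_Icc.2 ⟨Nat.le_add_left 1 L, le_refl _⟩) (2*m+1)
          (Finset.mem_Icc.2 ⟨Nat.le_add_left 1 _, hk⟩)
        rw [hsum]
        calc |dev 0 ((m:ℝ)/2^L) x + dev ((((2*m+1:ℕ):ℝ)-1)/2^(L+1)) (((2*m+1:ℕ):ℝ)/2^(L+1)) x|
            ≤ |dev 0 ((m:ℝ)/2^L) x| + |dev ((((2*m+1:ℕ):ℝ)-1)/2^(L+1)) (((2*m+1:ℕ):ℝ)/2^(L+1)) x| :=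
              abs_add_le _ _
          _ ≤ n * ∑ l ∈ Finset.Icc 1 L, t l + n * t (L+1) := by
              have := le_of_lt h2
              linarith
          _ = n * (∑ l ∈ Finset.Icc 1 L, t l + t (L+1)) := by ring

lemma cle_eq_cnt {n : ℕ} (s : ℝ) (hs0 : 0 ≤ s) (x : Fin n → Fin 1 → ℝ) (hs : Supp x) :
    cle s x = cnt 0 s x := by
  unfold cle cnt
  refine Finset.sum_congr rfl fun j _ => ?_
  have hj := hs j
  by_cases h : x j 0 ≤ s
  · rw [if_pos h, if_pos ⟨hj.1, h⟩]
  · rw [if_neg h, if_neg (by intro hh; exact h hh.2)]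

lemma cle_mono {n : ℕ} (s s' : ℝ) (hss : s ≤ s') (x : Fin n → Fin 1 → ℝ) :
    cle s x ≤ cle s' x := by
  unfold cle
  refine Finset.sum_le_sum fun j _ => ?_
  by_cases h : x j 0 ≤ s
  · rw [if_pos h, if_pos (h.trans hss)]
  · rw [if_neg h]; split_ifs <;> norm_num

lemma cle_nonneg {n : ℕ} (s : ℝ) (x : Fin n → Fin 1 → ℝ) : 0 ≤ cle s x :=
  Finset.sum_nonneg fun j _ => by split_ifs <;> norm_num

lemma cle_le_n {n : ℕ} (s : ℝ) (x : Fin n → Fin 1 → ℝ) : cle s x ≤ n := by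
  unfold cle
  calc ∑ j : Fin n, (if x j 0 ≤ s then (1:ℝ) else 0) ≤ ∑ _j : Fin n, (1:ℝ) :=
        Finset.sum_le_sum fun j _ => by split_ifs <;> norm_num
    _ = n := by rw [Finset.sum_const, Finset.card_univ, Fintype.card_fin, nsmul_eq_mul, mul_one]

lemma goodS_of_big {n : ℕ} (ε : ℝ) (hε : 1 ≤ ε) (x : Fin n → Fin 1 → ℝ) :
    GoodS ε x := by
  intro s hs01
  have h1 : (0:ℝ) ≤ n * s := mul_nonneg (Nat.cast_nonneg n) hs01.1
  have h2 : (n:ℝ) * s ≤ n := by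
    have := mul_le_mul_of_nonneg_left hs01.2 (Nat.cast_nonneg n : (0:ℝ) ≤ n)
    simpa using this
  have h3 := cle_nonneg s x
  have h4 := cle_le_n s x
  rw [abs_le]
  have hn : (0:ℝ) ≤ (n:ℝ) := Nat.cast_nonneg n
  constructor <;> nlinarith

/-- from grid control to uniform control -/
lemma goodS_of_grid {n L : ℕ} (ε : ℝ) (hε : 0 < ε) (x : Fin n → Fin 1 → ℝ) (hs : Supp x)
    (hres : (1:ℝ)/2^L ≤ ε/2)
    (hgrid : ∀ k : ℕ, k ≤ 2^L → |dev 0 ((k:ℝ)/2^L) x| ≤ n * (ε/2)) :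
    GoodS ε x := by
  intro s hs01
  obtain ⟨h0s, hs1⟩ := hs01
  have h2L : (0:ℝ) < 2^L := by positivity
  set k : ℕ := min ⌊s * 2^L⌋₊ (2^L - 1) with hk
  have hk1 : (k:ℝ) ≤ s * 2^L := by
    have h1 : (k:ℕ) ≤ ⌊s * 2^L⌋₊ := min_le_left _ _
    calc (k:ℝ) ≤ (⌊s * 2^L⌋₊ : ℝ) := Nat.cast_le.2 h1
      _ ≤ s * 2^L := Nat.floor_le (by positivity)
  have hk2 : s * 2^L ≤ (k:ℝ) + 1 := by
    rcases le_or_gt ⌊s * 2^L⌋₊ (2^L - 1) with h|h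
    · have : k = ⌊s * 2^L⌋₊ := by omega
      rw [this]
      exact (Nat.lt_floor_add_one _).le
    · have hkk : k = 2^L - 1 := by omega
      have hpow : (1:ℕ) ≤ 2^L := Nat.one_le_two_pow
      have : ((k:ℕ):ℝ) + 1 = ((2:ℝ))^L := by
        rw [hkk]
        push_cast [Nat.cast_sub hpow]
        ring
      rw [this]
      calc s * 2^L ≤ 1 * 2^L := by nlinarith
        _ = (2:ℝ)^L := one_mul _
  have hk3 : k + 1 ≤ 2^L := by
    have hpow : (1:ℕ) ≤ 2^L := Nat.one_le_two_pow
    omega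
  have hcast : ((k+1:ℕ):ℝ) = (k:ℝ) + 1 := by push_cast; ring
  have hg1 := hgrid (k+1) hk3
  have hg2 := hgrid k (by omega)
  rw [hcast] at hg1
  -- devs
  have hd1 : dev 0 (((k:ℝ)+1)/2^L) x = cnt 0 (((k:ℝ)+1)/2^L) x - n * (((k:ℝ)+1)/2^L) := by
    unfold dev; ring_nf
  have hd2 : dev 0 ((k:ℝ)/2^L) x = cnt 0 ((k:ℝ)/2^L) x - n * ((k:ℝ)/2^L) := by
    unfold dev; ring_nf
  have hnn : (0:ℝ) ≤ n := Nat.cast_nonneg n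
  have hklo : (k:ℝ)/2^L ≤ s := by rw [div_le_iff₀ h2L]; linarith
  have hkhi : s ≤ ((k:ℝ)+1)/2^L := by rw [le_div_iff₀ h2L]; linarith
  have hko : (0:ℝ) ≤ (k:ℝ)/2^L := by positivity
  have hcle1 : cle s x ≤ cle (((k:ℝ)+1)/2^L) x := cle_mono _ _ hkhi x
  have hcle2 : cle ((k:ℝ)/2^L) x ≤ cle s x := cle_mono _ _ hklo x
  have he1 : cle (((k:ℝ)+1)/2^L) x = cnt 0 (((k:ℝ)+1)/2^L) x :=
    cle_eq_cnt _ (by positivity) x hs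
  have he2 : cle ((k:ℝ)/2^L) x = cnt 0 ((k:ℝ)/2^L) x := cle_eq_cnt _ hko x hs
  have habs1 := (abs_le.1 hg1).2
  have habs2 := (abs_le.1 hg2).1
  have hstep : ((k:ℝ)+1)/2^L - (k:ℝ)/2^L = 1/2^L := by field_simp; ring
  rw [abs_le]
  constructor
  · -- n*s - cle s ≤ n*ε i.e. -(n ε) ≤ cle - n s
    have : (n:ℝ) * s - cle s x ≤ n * (s - (k:ℝ)/2^L) + (n * ((k:ℝ)/2^L) - cle ((k:ℝ)/2^L) x) := by
      linarith
    have hsk : s - (k:ℝ)/2^L ≤ 1/2^L := by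
      rw [← hstep]; linarith
    have h5 : (n:ℝ) * (s - (k:ℝ)/2^L) ≤ n * (ε/2) := by
      have : (n:ℝ) * (s - (k:ℝ)/2^L) ≤ n * (1/2^L) :=
        mul_le_mul_of_nonneg_left hsk hnn
      have h6 : (n:ℝ) * (1/2^L) ≤ n * (ε/2) := mul_le_mul_of_nonneg_left hres hnn
      linarith
    rw [hd2] at habs2
    rw [he2] at hcle2
    nlinarith
  · have : cle s x - (n:ℝ) * s ≤ (cnt 0 (((k:ℝ)+1)/2^L) x - n * (((k:ℝ)+1)/2^L))
        + n * (((k:ℝ)+1)/2^L - s) := by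
      rw [← he1]; linarith
    have hsk : ((k:ℝ)+1)/2^L - s ≤ 1/2^L := by
      rw [← hstep]; linarith
    have h5 : (n:ℝ) * (((k:ℝ)+1)/2^L - s) ≤ n * (ε/2) := by
      have h6 : (n:ℝ) * (((k:ℝ)+1)/2^L - s) ≤ n * (1/2^L) :=
        mul_le_mul_of_nonneg_left hsk hnn
      have h7 : (n:ℝ) * (1/2^L) ≤ n * (ε/2) := mul_le_mul_of_nonneg_left hres hnn
      linarith
    rw [hd1] at habs1
    nlinarith

/-- order statistics control -/
lemma orderstat {n : ℕ} (ε : ℝ) (hε : 0 ≤ ε) (x : Fin n → Fin 1 → ℝ) (hs : Supp x)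
    (hg : GoodS ε x) (k : Fin n) :
    ((k:ℝ)+1)/n - ε ≤ x (Tuple.sort (fun j => x j 0) k) 0
      ∧ x (Tuple.sort (fun j => x j 0) k) 0 ≤ (k:ℝ)/n + ε := by
  set u : Fin n → ℝ := fun j => x j 0 with hu
  set σ := Tuple.sort u with hσ
  have hmono : Monotone (u ∘ σ) := Tuple.monotone_sort u
  have hnpos : (0:ℝ) < n := by
    have := k.pos
    exact_mod_cast this
  have hsum : ∀ s : ℝ, cle s x = ∑ m : Fin n, (if u (σ m) ≤ s then (1:ℝ) else 0) := by
    intro s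
    unfold cle
    exact (Equiv.sum_comp σ (fun j => if u j ≤ s then (1:ℝ) else 0)).symm
  have hwk0 : 0 < u (σ k) := (hs (σ k)).1
  have hwk1 : u (σ k) ≤ 1 := (hs (σ k)).2
  constructor
  · -- lower bound
    have hcount : ((k:ℝ) + 1) ≤ cle (u (σ k)) x := by
      rw [hsum]
      have h1 : ∑ m ∈ Finset.Iic k, (if u (σ m) ≤ u (σ k) then (1:ℝ) else 0)
          = ∑ _m ∈ Finset.Iic k, (1:ℝ) :=
        Finset.sum_congr rfl fun m hm => if_pos (hmono (Finset.mem_Iic.1 hm))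
      have h2 : ∑ _m ∈ Finset.Iic k, (1:ℝ) = ((k:ℝ) + 1) := by
        rw [Finset.sum_const, Fin.card_Iic, nsmul_eq_mul, mul_one]
        push_cast
        ring
      calc ((k:ℝ) + 1) = ∑ m ∈ Finset.Iic k, (if u (σ m) ≤ u (σ k) then (1:ℝ) else 0) := by
            rw [h1, h2]
        _ ≤ ∑ m : Fin n, (if u (σ m) ≤ u (σ k) then (1:ℝ) else 0) :=
            Finset.sum_le_sum_of_subset_of_nonneg (Finset.subset_univ _)
              (fun m _ _ => by split_ifs <;> norm_num)
    have hgk := (abs_le.1 (hg (u (σ k)) ⟨hwk0.le, hwk1⟩)).2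
    rw [div_sub' hnpos.ne', div_le_iff₀ hnpos]
    nlinarith
  · -- upper bound
    by_contra hcon
    push_neg at hcon
    set s0 := ((k:ℝ)/n + ε + u (σ k))/2 with hs0
    have hs0lt : s0 < u (σ k) := by
      rw [hs0]; linarith
    have hs0gt : (k:ℝ)/n + ε < s0 := by
      rw [hs0]; linarith
    have hs0nn : 0 ≤ s0 := by
      have : (0:ℝ) ≤ (k:ℝ)/n := by positivity
      linarith
    have hs01 : s0 ≤ 1 := by linarith
    have hcle : cle s0 x ≤ (k:ℝ) := by
      rw [hsum]
      have hterm : ∀ m : Fin n, (if u (σ m) ≤ s0 then (1:ℝ) else 0)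
          ≤ (if m ∈ Finset.Iio k then (1:ℝ) else 0) := by
        intro m
        by_cases h : u (σ m) ≤ s0
        · rw [if_pos h, if_pos]
          rw [Finset.mem_Iio]
          by_contra hmk
          push_neg at hmk
          have := hmono hmk
          simp only [Function.comp_apply] at this
          linarith
        · rw [if_neg h]
          split_ifs <;> norm_num
      calc ∑ m : Fin n, (if u (σ m) ≤ s0 then (1:ℝ) else 0)
          ≤ ∑ m : Fin n, (if m ∈ Finset.Iio k then (1:ℝ) else 0) :=
            Finset.sum_le_sum fun m _ => hterm m
        _ = (k:ℝ) := by
            rw [Finset.sum_ite_mem, Finset.univ_inter, Finset.sum_const, Fin.card_Iio,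
              nsmul_eq_mul, mul_one]
    have hgk := (abs_le.1 (hg s0 ⟨hs0nn, hs01⟩)).1
    have : (n:ℝ) * s0 ≤ (k:ℝ) + n * ε := by linarith
    have h2 : s0 ≤ (k:ℝ)/n + ε := by
      rw [div_add' _ _ _ hnpos.ne']
      rw [le_div_iff₀ hnpos]
      linarith
    linarith

lemma eDist_one (a b : Fin 1 → ℝ) : eDist a b = |a 0 - b 0| := by
  unfold eDist
  rw [Fin.sum_univ_one]
  exact Real.sqrt_sq_eq_abs _

/-- the key deterministic bound -/
lemma bottleneck_le {n : ℕ} (hn : 1 ≤ n) (ε : ℝ) (hε : 0 ≤ ε)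
    (x y : Fin n → Fin 1 → ℝ) (hsx : Supp x) (hsy : Supp y)
    (hgx : GoodS ε x) (hgy : GoodS ε y) :
    bottleneck x y ≤ 2 * ε := by
  haveI : Nonempty (Fin n) := ⟨⟨0, hn⟩⟩
  set u : Fin n → ℝ := fun j => x j 0 with hu
  set v : Fin n → ℝ := fun j => y j 0 with hv
  set σ := Tuple.sort u with hσ
  set τ := Tuple.sort v with hτ
  set φ : Equiv.Perm (Fin n) := σ.symm.trans τ with hφ
  have hbdd : BddBelow (Set.range fun ψ : Equiv.Perm (Fin n) => ⨆ i, eDist (x i) (y (ψ i))) := by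
    refine ⟨0, fun z hz => ?_⟩
    obtain ⟨ψ, rfl⟩ := hz
    have h1 : (0:ℝ) ≤ eDist (x (Classical.arbitrary (Fin n))) (y (ψ (Classical.arbitrary (Fin n)))) :=
      Real.sqrt_nonneg _
    exact le_trans h1 (le_ciSup (f := fun i => eDist (x i) (y (ψ i)))
      (Set.Finite.bddAbove (Set.finite_range _)) (Classical.arbitrary (Fin n)))
  have hstep : bottleneck x y ≤ ⨆ i, eDist (x i) (y (φ i)) := ciInf_le hbdd φ
  refine hstep.trans (ciSup_le fun i => ?_)
  obtain ⟨k, rfl⟩ : ∃ k, i = σ k := ⟨σ.symm i, (σ.apply_symm_apply i).symm⟩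
  have hφi : φ (σ k) = τ k := by simp [hφ]
  rw [hφi, eDist_one]
  have hx1 := orderstat ε hε x hsx hgx k
  have hy1 := orderstat ε hε y hsy hgy k
  rw [abs_le]
  have h1n : (0:ℝ) < n := by exact_mod_cast Nat.lt_of_lt_of_le Nat.zero_lt_one hn
  have hdiv : ((k:ℝ)+1)/n - (k:ℝ)/n = 1/n := by field_simp; ring
  have hpos : (0:ℝ) ≤ 1/n := by positivity
  constructor
  · have := hx1.1
    have := hy1.2
    have hxk : x (σ k) 0 = u (σ k) := rfl
    have hyk : y (τ k) 0 = v (τ k) := rfl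
    nlinarith [hx1.1, hy1.2]
  · nlinarith [hx1.2, hy1.1]

def tval (ε : ℝ) (l : ℕ) : ℝ := ε/6 * (3/4)^l
def lamval (ε : ℝ) (l : ℕ) : ℝ := ε/12 * (3/2)^l

def badUp (n : ℕ) (ε : ℝ) (l k : ℕ) : Set (Fin n → Fin 1 → ℝ) :=
  {x | (n:ℝ) * tval ε l ≤ dev (((k:ℝ)-1)/2^l) ((k:ℝ)/2^l) x}
def badDn (n : ℕ) (ε : ℝ) (l k : ℕ) : Set (Fin n → Fin 1 → ℝ) :=
  {x | (n:ℝ) * tval ε l ≤ -dev (((k:ℝ)-1)/2^l) ((k:ℝ)/2^l) x}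
def badCU (n L : ℕ) (ε : ℝ) : Set (Fin n → Fin 1 → ℝ) :=
  ⋃ l ∈ Finset.Icc 1 L, ⋃ k ∈ Finset.Icc 1 (2^l), (badUp n ε l k ∪ badDn n ε l k)
def badNS (n : ℕ) : Set (Fin n → Fin 1 → ℝ) := {x | ¬ Supp x}

lemma tval_nonneg {ε : ℝ} (hε : 0 ≤ ε) (l : ℕ) : 0 ≤ tval ε l := by
  unfold tval; positivity

lemma geomIcc (r : ℝ) (hr : r ≠ 1) :
    ∀ L : ℕ, ∑ l ∈ Finset.Icc 1 L, r^l = (r - r^(L+1))/(1-r) := by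
  intro L
  induction L with
  | zero => simp
  | succ L ih =>
      rw [Finset.sum_Icc_succ_top (by omega), ih]
      have h1 : 1 - r ≠ 0 := by intro h; apply hr; linarith
      field_simp
      ring


lemma geomIcc_le (r : ℝ) (h0 : 0 ≤ r) (h1 : r < 1) (L : ℕ) :
    ∑ l ∈ Finset.Icc 1 L, r^l ≤ r/(1-r) := by
  rw [geomIcc r h1.ne L]
  have hd : (0:ℝ) < 1 - r := by linarith
  have hnum : r - r^(L+1) ≤ r := by nlinarith [pow_nonneg h0 (L+1)]
  exact (div_le_div_iff_of_pos_right hd).2 hnum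

lemma tval_sum_le {ε : ℝ} (hε : 0 ≤ ε) (L : ℕ) :
    ∑ l ∈ Finset.Icc 1 L, tval ε l ≤ ε/2 := by
  unfold tval
  rw [← Finset.mul_sum]
  have h := geomIcc_le (3/4) (by norm_num) (by norm_num) L
  have h2 : (3/4:ℝ)/(1-3/4) = 3 := by norm_num
  rw [h2] at h
  calc ε/6 * ∑ l ∈ Finset.Icc 1 L, (3/4:ℝ)^l ≤ ε/6 * 3 :=
        mul_le_mul_of_nonneg_left h (by positivity)
    _ = ε/2 := by ring

lemma expinv_sum_le (L : ℕ) : ∑ l ∈ Finset.Icc 1 L, exp (-(l:ℝ)) ≤ 1 := by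
  have hrw : ∀ l : ℕ, exp (-(l:ℝ)) = (exp (-1))^l := by
    intro l
    rw [← Real.exp_nat_mul]
    congr 1
    ring
  rw [Finset.sum_congr rfl fun l _ => hrw l]
  have h0 : (0:ℝ) ≤ exp (-1) := (exp_pos _).le
  have hlt : exp (-1) < 1 := by
    rw [Real.exp_lt_one_iff]
    norm_num
  have h := geomIcc_le _ h0 hlt L
  have h2 : exp (-1) ≤ 1/2 := by
    have h3 : (2:ℝ) ≤ exp 1 := by
      have := Real.add_one_le_exp 1
      linarith
    rw [Real.exp_neg, inv_eq_one_div]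
    exact (one_div_le_one_div_of_le (by norm_num) h3)
  calc ∑ l ∈ Finset.Icc 1 L, (exp (-1))^l ≤ exp (-1)/(1 - exp (-1)) := h
    _ ≤ 1 := by
        rw [div_le_one (by linarith)]
        linarith

lemma level_real (γ : ℝ) (hγ : 14 ≤ γ) (l : ℕ) (hl : 1 ≤ l) :
    (2:ℝ)^l * (2 * exp (-(γ * (9/8)^l))) ≤ 2 * exp (-γ) * exp (-(l:ℝ)) := by
  have hlr : (1:ℝ) ≤ (l:ℝ) := by exact_mod_cast hl
  have hb : 1 + (l:ℝ)*(1/8) ≤ (9/8:ℝ)^l := by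
    have h := one_add_mul_le_pow (a := (1/8:ℝ)) (by norm_num) l
    have : ((1:ℝ) + 1/8)^l = (9/8:ℝ)^l := by norm_num
    rw [this] at h
    calc (1:ℝ) + (l:ℝ)*(1/8) = 1 + (l:ℝ)*(1/8) := rfl
      _ ≤ (9/8:ℝ)^l := by
          have := h
          linarith [h]
  have h2l : (2:ℝ)^l = exp ((l:ℝ) * Real.log 2) := by
    rw [Real.exp_nat_mul, Real.exp_log (by norm_num : (0:ℝ) < 2)]
  have hexp : (l:ℝ) * Real.log 2 - γ * (9/8)^l ≤ -γ - (l:ℝ) := by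
    have hγ9 : γ * (1 + (l:ℝ)*(1/8)) ≤ γ * (9/8)^l :=
      mul_le_mul_of_nonneg_left hb (by linarith)
    have hlog : Real.log 2 + 1 ≤ γ/8 := by
      nlinarith [Real.log_two_lt_d9]
    have : (l:ℝ) * (Real.log 2 + 1) ≤ (l:ℝ) * (γ/8) :=
      mul_le_mul_of_nonneg_left hlog (by linarith)
    nlinarith
  calc (2:ℝ)^l * (2 * exp (-(γ * (9/8)^l)))
      = 2 * (exp ((l:ℝ) * Real.log 2) * exp (-(γ * (9/8)^l))) := by rw [h2l]; ring
    _ = 2 * exp ((l:ℝ) * Real.log 2 + -(γ * (9/8)^l)) := by rw [Real.exp_add]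
    _ ≤ 2 * exp (-γ - (l:ℝ)) := by
        have h := Real.exp_le_exp.2 (show (l:ℝ) * Real.log 2 + -(γ * (9/8)^l) ≤ -γ - (l:ℝ) by
          linarith [hexp])
        linarith
    _ = 2 * exp (-γ) * exp (-(l:ℝ)) := by
        rw [show -γ - (l:ℝ) = -γ + -(l:ℝ) by ring, Real.exp_add]
        ring

/-- the bad event covers failure of (Supp ∧ GoodS) -/
lemma bad_incl {n L : ℕ} (ε : ℝ) (hε : 0 < ε) (hres : (1:ℝ)/2^L ≤ ε/2) :
    {x : Fin n → Fin 1 → ℝ | ¬ (Supp x ∧ GoodS ε x)} ⊆ badNS n ∪ badCU n L ε := by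
  intro x hx
  by_cases hsx : Supp x
  · right
    by_contra hcu
    apply hx
    refine ⟨hsx, ?_⟩
    have H : ∀ l ∈ Finset.Icc 1 L, ∀ k : ℕ, k ∈ Finset.Icc 1 (2^l) →
        |dev (((k:ℝ)-1)/2^l) ((k:ℝ)/2^l) x| < n * tval ε l := by
      intro l hl k hk
      by_contra habs
      push_neg at habs
      rcases le_abs.1 habs with h | h
      · exact hcu (Set.mem_biUnion hl (Set.mem_biUnion hk (Or.inl h)))
      · exact hcu (Set.mem_biUnion hl (Set.mem_biUnion hk (Or.inr h)))
    have hch := chain x hsx (tval ε) (tval_nonneg hε.le) L H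
    apply goodS_of_grid ε hε x hsx hres
    intro k hk
    refine (hch k hk).trans ?_
    exact mul_le_mul_of_nonneg_left (tval_sum_le hε.le L) (Nat.cast_nonneg n)
  · left; exact hsx

lemma up_bound {n L : ℕ} (ε : ℝ) (hε : 0 < ε) (h2L : (2:ℝ)^L ≤ 4/ε)
    (l : ℕ) (hl : 1 ≤ l) (hlL : l ≤ L) (k : ℕ) (hk1 : 1 ≤ k) (hk2 : k ≤ 2^l) :
    sampleMeasure 1 n (badUp n ε l k) ≤ ENNReal.ofReal (exp (-((n:ℝ)*ε^2/144 * (9/8)^l)))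
    ∧ sampleMeasure 1 n (badDn n ε l k) ≤ ENNReal.ofReal (exp (-((n:ℝ)*ε^2/144 * (9/8)^l))) := by
  set a : ℝ := ((k:ℝ)-1)/2^l with ha
  set b : ℝ := (k:ℝ)/2^l with hb
  have h2lpos : (0:ℝ) < 2^l := by positivity
  have h2lne : ((2:ℝ)^l) ≠ 0 := h2lpos.ne'
  have hk1' : (1:ℝ) ≤ (k:ℝ) := by exact_mod_cast hk1
  have hk2' : (k:ℝ) ≤ 2^l := by
    exact_mod_cast hk2
  have h0 : 0 ≤ a := div_nonneg (by linarith) h2lpos.le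
  have hab : a ≤ b := by
    rw [ha, hb]
    exact (div_le_div_iff_of_pos_right h2lpos).2 (by linarith)
  have hb1 : b ≤ 1 := by rw [hb, div_le_one h2lpos]; exact hk2'
  have hba : b - a = 1/2^l := by rw [ha, hb]; field_simp; ring
  set lam := lamval ε l with hlam
  have hlampos : 0 < lam := by rw [hlam]; unfold lamval; positivity
  have hlamle : lam ≤ 1 := by
    rw [hlam]; unfold lamval
    have e1 : ((3:ℝ)/2)^l ≤ (2:ℝ)^l := pow_le_pow_left₀ (by norm_num) (by norm_num) l
    have e2 : (2:ℝ)^l ≤ (2:ℝ)^L := pow_le_pow_right₀ (by norm_num) hlL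
    have e3 : ε/12 * (4/ε) = 1/3 := by field_simp; ring
    calc ε/12 * (3/2)^l ≤ ε/12 * (4/ε) := by
          apply mul_le_mul_of_nonneg_left _ (by positivity)
          calc ((3:ℝ)/2)^l ≤ (2:ℝ)^L := e1.trans e2
            _ ≤ 4/ε := h2L
      _ = 1/3 := e3
      _ ≤ 1 := by norm_num
  have habs : |lam| ≤ 1 := by rw [abs_of_pos hlampos]; exact hlamle
  have hnabs : |(-lam)| ≤ 1 := by rw [abs_neg, abs_of_pos hlampos]; exact hlamle
  have e1 : ((3:ℝ)/2)^l * ((3:ℝ)/4)^l = (9/8:ℝ)^l := by rw [← mul_pow]; norm_num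
  have e2 : ((3:ℝ)/2)^l * ((3:ℝ)/2)^l = (9/8:ℝ)^l * 2^l := by
    rw [← mul_pow, ← mul_pow]; norm_num
  have key1 : (b - a) * lam^2 = ε^2/144*(9/8:ℝ)^l := by
    rw [hba, hlam]
    unfold lamval
    rw [mul_pow, show (((3:ℝ)/2)^l)^2 = (9/8:ℝ)^l*2^l from by rw [pow_two]; exact e2]
    field_simp
    ring
  have key2 : lam * tval ε l = ε^2/72*(9/8:ℝ)^l := by
    rw [hlam]
    unfold lamval tval
    rw [mul_mul_mul_comm, e1]
    ring
  have hexpid : (n:ℝ) * ((b-a) * lam^2 - lam * tval ε l) = -((n:ℝ)*ε^2/144 * (9/8)^l) := by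
    rw [key1, key2]; ring
  constructor
  · have hcc := chernoff_core n a b lam (lam * tval ε l) h0 hab hb1 habs
    rw [hexpid] at hcc
    refine le_trans (measure_mono ?_) hcc
    intro x hx
    have hx' : (n:ℝ) * tval ε l ≤ dev a b x := hx
    have hm : lam * ((n:ℝ) * tval ε l) ≤ lam * dev a b x :=
      mul_le_mul_of_nonneg_left hx' hlampos.le
    show (n:ℝ) * (lam * tval ε l) ≤ lam * (cnt a b x - n * (b - a))
    unfold dev at hm
    linarith [hm]
  · have hexpid2 : (n:ℝ) * ((b-a) * (-lam)^2 - lam * tval ε l)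
        = -((n:ℝ)*ε^2/144 * (9/8)^l) := by
      rw [show (-lam)^2 = lam^2 by ring, key1, key2]; ring
    have hcc := chernoff_core n a b (-lam) (lam * tval ε l) h0 hab hb1 hnabs
    rw [hexpid2] at hcc
    refine le_trans (measure_mono ?_) hcc
    intro x hx
    have hx' : (n:ℝ) * tval ε l ≤ -dev a b x := hx
    have hm : lam * ((n:ℝ) * tval ε l) ≤ lam * (-dev a b x) :=
      mul_le_mul_of_nonneg_left hx' hlampos.le
    show (n:ℝ) * (lam * tval ε l) ≤ (-lam) * (cnt a b x - n * (b - a))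
    unfold dev at hm
    linarith [hm]

lemma CU_bound {n L : ℕ} (ε : ℝ) (hε : 0 < ε) (h2L : (2:ℝ)^L ≤ 4/ε)
    (hγ : 2016 ≤ (n:ℝ) * ε^2) :
    sampleMeasure 1 n (badCU n L ε) ≤ ENNReal.ofReal (2 * exp (-((n:ℝ)*ε^2/144))) := by
  set γ : ℝ := (n:ℝ)*ε^2/144 with hγdef
  have hγ14 : 14 ≤ γ := by rw [hγdef]; linarith
  have hγ0 : 0 ≤ γ := by linarith
  calc sampleMeasure 1 n (badCU n L ε)
      ≤ ∑ l ∈ Finset.Icc 1 L, sampleMeasure 1 n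
          (⋃ k ∈ Finset.Icc 1 (2^l), (badUp n ε l k ∪ badDn n ε l k)) :=
        measure_biUnion_finset_le _ _
    _ ≤ ∑ l ∈ Finset.Icc 1 L, ENNReal.ofReal (2 * exp (-γ) * exp (-(l:ℝ))) := by
        refine Finset.sum_le_sum fun l hl => ?_
        obtain ⟨hl1, hlL⟩ := Finset.mem_Icc.1 hl
        calc sampleMeasure 1 n (⋃ k ∈ Finset.Icc 1 (2^l), (badUp n ε l k ∪ badDn n ε l k))
            ≤ ∑ k ∈ Finset.Icc 1 (2^l), sampleMeasure 1 n (badUp n ε l k ∪ badDn n ε l k) :=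
              measure_biUnion_finset_le _ _
          _ ≤ ∑ _k ∈ Finset.Icc 1 (2^l),
                (ENNReal.ofReal (exp (-(γ * (9/8)^l))) + ENNReal.ofReal (exp (-(γ * (9/8)^l)))) := by
              refine Finset.sum_le_sum fun k hk => ?_
              obtain ⟨hk1, hk2⟩ := Finset.mem_Icc.1 hk
              have hub := up_bound (n := n) ε hε h2L l hl1 hlL k hk1 hk2
              have hrw : -((n:ℝ)*ε^2/144 * (9/8)^l) = -(γ * (9/8)^l) := by rw [hγdef]
              rw [hrw] at hub
              exact (measure_union_le _ _).trans (add_le_add hub.1 hub.2)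
          _ = (2^l : ℕ) • (ENNReal.ofReal (exp (-(γ * (9/8)^l)))
                + ENNReal.ofReal (exp (-(γ * (9/8)^l)))) := by
              rw [Finset.sum_const, Nat.card_Icc]
              congr 1
          _ ≤ ENNReal.ofReal (2 * exp (-γ) * exp (-(l:ℝ))) := by
              rw [← ENNReal.ofReal_add (exp_pos _).le (exp_pos _).le, nsmul_eq_mul]
              have hcast : ((2^l : ℕ) : ENNReal) = ENNReal.ofReal ((2:ℝ)^l) := by
                rw [← ENNReal.ofReal_natCast]
                congr 1
                push_cast
                ring
              rw [hcast, ← ENNReal.ofReal_mul (by positivity)]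
              apply ENNReal.ofReal_le_ofReal
              have := level_real γ hγ14 l hl1
              calc (2:ℝ)^l * (exp (-(γ * (9/8)^l)) + exp (-(γ * (9/8)^l)))
                  = (2:ℝ)^l * (2 * exp (-(γ * (9/8)^l))) := by ring
                _ ≤ 2 * exp (-γ) * exp (-(l:ℝ)) := this
    _ = ENNReal.ofReal (∑ l ∈ Finset.Icc 1 L, 2 * exp (-γ) * exp (-(l:ℝ))) :=
        (ENNReal.ofReal_sum_of_nonneg fun l _ => by positivity).symm
    _ ≤ ENNReal.ofReal (2 * exp (-γ)) := by
        apply ENNReal.ofReal_le_ofReal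
        rw [← Finset.mul_sum]
        calc 2 * exp (-γ) * (∑ l ∈ Finset.Icc 1 L, exp (-(l:ℝ)))
            ≤ 2 * exp (-γ) * 1 := by
              apply mul_le_mul_of_nonneg_left (expinv_sum_le L) (by positivity)
          _ = 2 * exp (-γ) := by ring

lemma NS_null (n : ℕ) : sampleMeasure 1 n (badNS n) = 0 := by
  have hsub : badNS n ⊆ ⋃ j : Fin n,
      (Function.eval j) ⁻¹' ({v : Fin 1 → ℝ | v 0 ∈ Set.Ioc (0:ℝ) 1}ᶜ) := by
    intro x hx
    unfold badNS Supp at hx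
    rw [Set.mem_setOf_eq] at hx
    push_neg at hx
    obtain ⟨j, hj⟩ := hx
    exact Set.mem_iUnion.2 ⟨j, hj⟩
  refine measure_mono_null hsub (measure_iUnion_null fun j => ?_)
  have hnull : cubeMeasure 1 ({v : Fin 1 → ℝ | v 0 ∈ Set.Ioc (0:ℝ) 1}ᶜ) = 0 := by
    rw [measure_compl (measurableSet_ptIoc 0 1) (measure_ne_top _ _)]
    rw [cube_Ioc 0 1 le_rfl zero_le_one le_rfl, measure_univ]
    simp
  exact Measure.pi_eval_preimage_null _ hnull

lemma exL (ε : ℝ) (hε : 0 < ε) (hε1 : ε ≤ 1) :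
    ∃ L : ℕ, 2/ε ≤ (2:ℝ)^L ∧ (2:ℝ)^L ≤ 4/ε := by
  have hex : ∃ m : ℕ, 2/ε ≤ (2:ℝ)^m := by
    obtain ⟨m, hm⟩ := pow_unbounded_of_one_lt (2/ε) (by norm_num : (1:ℝ) < 2)
    exact ⟨m, hm.le⟩
  classical
  set L := Nat.find hex with hL
  have h1 : 2/ε ≤ (2:ℝ)^L := Nat.find_spec hex
  refine ⟨L, h1, ?_⟩
  match hL2 : L with
  | 0 =>
      have : (2:ℝ)^(0:ℕ) = 1 := by norm_num
      rw [this]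
      rw [le_div_iff₀ hε]
      linarith
  | M+1 =>
      have hM : ¬ (2/ε ≤ (2:ℝ)^M) := Nat.find_min hex (by omega)
      push_neg at hM
      rw [pow_succ]
      have h4 : (4:ℝ)/ε = 2*(2/ε) := by ring
      linarith



/-- in dimension `d = 1`, `P{M_n ≥ β/√n} ≤ c'·exp(-c·β²)`. -/
theorem stmt10 :
    ∃ c : ℝ, 0 < c ∧ ∃ c' : ℝ, 0 < c' ∧
      ∀ β : ℝ, 0 < β → ∀ n : ℕ, 1 ≤ n →
        pairMeasure 1 n {q | β / Real.sqrt n ≤ bottleneck q.1 q.2}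
          ≤ ENNReal.ofReal (c' * Real.exp (-c * β ^ 2)) := by
  refine ⟨1/2304, by norm_num, 4 * Real.exp 14, by positivity, ?_⟩
  intro β hβ n hn
  have hnpos : (0:ℝ) < n := by exact_mod_cast hn
  have hsqp : (0:ℝ) < Real.sqrt n := Real.sqrt_pos.2 hnpos
  set ε : ℝ := β / (4 * Real.sqrt n) with hε
  have hεpos : 0 < ε := by rw [hε]; positivity
  have hε2 : 2 * ε < β / Real.sqrt n := by
    rw [hε]
    rw [show 2 * (β / (4 * Real.sqrt n)) = β / (2 * Real.sqrt n) by ring]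
    rw [div_lt_div_iff₀ (by positivity) hsqp]
    nlinarith
  have hs2 : Real.sqrt n ^ 2 = (n:ℝ) := Real.sq_sqrt hnpos.le
  have hnε : (n:ℝ) * ε^2 = β^2/16 := by
    rw [hε, div_pow, mul_pow, hs2]
    field_simp
    ring
  set Bad : Set (Fin n → Fin 1 → ℝ) := {x | ¬ (Supp x ∧ GoodS ε x)} with hBad
  have hincl : {q : (Fin n → Fin 1 → ℝ) × (Fin n → Fin 1 → ℝ) |
      β / Real.sqrt n ≤ bottleneck q.1 q.2}
      ⊆ (Bad ×ˢ (Set.univ : Set (Fin n → Fin 1 → ℝ))) ∪ ((Set.univ : Set (Fin n → Fin 1 → ℝ)) ×ˢ Bad) := by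
    intro q hq
    rw [Set.mem_setOf_eq] at hq
    by_cases hx : Supp q.1 ∧ GoodS ε q.1
    · by_cases hy : Supp q.2 ∧ GoodS ε q.2
      · exfalso
        have := bottleneck_le hn ε hεpos.le q.1 q.2 hx.1 hy.1 hx.2 hy.2
        linarith
      · exact Or.inr ⟨trivial, hy⟩
    · exact Or.inl ⟨hx, trivial⟩
  have hmb : pairMeasure 1 n {q | β / Real.sqrt n ≤ bottleneck q.1 q.2}
      ≤ sampleMeasure 1 n Bad + sampleMeasure 1 n Bad := by
    refine (measure_mono hincl).trans ?_
    refine (measure_union_le _ _).trans ?_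
    unfold pairMeasure
    rw [Measure.prod_prod, Measure.prod_prod, measure_univ, mul_one, one_mul]
  by_cases hsmall : (n:ℝ) * ε^2 < 2016
  · have h1 : pairMeasure 1 n {q | β / Real.sqrt n ≤ bottleneck q.1 q.2} ≤ 1 :=
      prob_le_one
    refine h1.trans ?_
    have hβ2 : β^2/16 < 2016 := hnε ▸ hsmall
    have hexp : (1:ℝ) ≤ 4 * Real.exp 14 * Real.exp (-(1/2304) * β^2) := by
      have h2 : (-14:ℝ) ≤ -(1/2304) * β^2 := by nlinarith
      have h3 : Real.exp 14 * Real.exp (-14) ≤ Real.exp 14 * Real.exp (-(1/2304)*β^2) :=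
        mul_le_mul_of_nonneg_left (Real.exp_le_exp.2 h2) (Real.exp_pos 14).le
      have h4 : Real.exp 14 * Real.exp (-14) = 1 := by
        rw [← Real.exp_add]; norm_num
      nlinarith
    calc (1:ENNReal) = ENNReal.ofReal 1 := by simp
      _ ≤ ENNReal.ofReal (4 * Real.exp 14 * Real.exp (-(1/2304) * β^2)) :=
          ENNReal.ofReal_le_ofReal hexp
  · push_neg at hsmall
    by_cases hε1 : ε ≤ 1
    · obtain ⟨L, hL1, hL2⟩ := exL ε hεpos hε1
      have hres : (1:ℝ)/2^L ≤ ε/2 := by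
        rw [div_le_iff₀ hεpos] at hL1
        rw [div_le_div_iff₀ (by positivity) (by norm_num : (0:ℝ) < 2)]
        nlinarith
      have hB : sampleMeasure 1 n Bad ≤ ENNReal.ofReal (2 * Real.exp (-((n:ℝ)*ε^2/144))) := by
        refine (measure_mono (bad_incl ε hεpos hres)).trans ?_
        refine (measure_union_le _ _).trans ?_
        rw [NS_null, zero_add]
        exact CU_bound ε hεpos hL2 hsmall
      refine hmb.trans ?_
      calc sampleMeasure 1 n Bad + sampleMeasure 1 n Bad
          ≤ ENNReal.ofReal (2 * Real.exp (-((n:ℝ)*ε^2/144)))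
            + ENNReal.ofReal (2 * Real.exp (-((n:ℝ)*ε^2/144))) := add_le_add hB hB
        _ = ENNReal.ofReal (4 * Real.exp (-((n:ℝ)*ε^2/144))) := by
            rw [← ENNReal.ofReal_add (by positivity) (by positivity)]
            congr 1
            ring
        _ ≤ ENNReal.ofReal (4 * Real.exp 14 * Real.exp (-(1/2304) * β^2)) := by
            apply ENNReal.ofReal_le_ofReal
            have hid : -((n:ℝ)*ε^2/144) = -(1/2304) * β^2 := by
              rw [hnε]; ring
            rw [hid]
            have h14 : (1:ℝ) ≤ Real.exp 14 := by
              rw [show (1:ℝ) = Real.exp 0 by rw [Real.exp_zero]]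
              exact Real.exp_le_exp.2 (by norm_num)
            nlinarith [Real.exp_pos (-(1/2304) * β^2)]
    · push_neg at hε1
      have hBsub : Bad ⊆ badNS n := by
        intro x hx
        rw [hBad, Set.mem_setOf_eq] at hx
        by_contra hns
        have hsupp : Supp x := by
          unfold badNS at hns
          rw [Set.mem_setOf_eq] at hns
          exact not_not.1 hns
        exact hx ⟨hsupp, goodS_of_big ε hε1.le x⟩
      have hB0 : sampleMeasure 1 n Bad = 0 := measure_mono_null hBsub (NS_null n)
      refine hmb.trans ?_
      rw [hB0, add_zero]
      exact zero_le


end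
end

section
/- Let d ≥ 1, n ≥ 2, and 0 < Δ < 1/2, and let G ∼ G(X_n; u) be a random geometric graph in [0,1]^d with radius u = √d·(1 − 2Δ). Then P{G is not a complete graph} ≥ n(n−1)·Δ^{2d}·(1 − 2Δ^d)^{n−2}. -/
open MeasureTheory Real

noncomputable section

lemma prod_if_pair {M : Type*} [CommMonoid M] {n : ℕ} {i j : Fin n} (hji : j ≠ i)
    (p q r : M) :
    (∏ k : Fin n, if k = i then p else if k = j then q else r) = p * (q * r ^ (n - 2)) := by
  classical
  rw [← Finset.mul_prod_erase Finset.univ _ (Finset.mem_univ i), if_pos rfl]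
  congr 1
  rw [← Finset.mul_prod_erase _ _ (Finset.mem_erase.mpr ⟨hji, Finset.mem_univ j⟩),
    if_neg hji, if_pos rfl]
  congr 1
  have hcard : ((Finset.univ.erase i).erase j).card = n - 2 := by
    rw [Finset.card_erase_of_mem (Finset.mem_erase.mpr ⟨hji, Finset.mem_univ j⟩),
      Finset.card_erase_of_mem (Finset.mem_univ i), Finset.card_univ, Fintype.card_fin,
      Nat.sub_sub]
  calc ∏ k ∈ (Finset.univ.erase i).erase j, (if k = i then p else if k = j then q else r)
      = ∏ _k ∈ (Finset.univ.erase i).erase j, r := by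
        refine Finset.prod_congr rfl fun k hk => ?_
        obtain ⟨hkj, hk2⟩ := Finset.mem_erase.mp hk
        obtain ⟨hki, -⟩ := Finset.mem_erase.mp hk2
        rw [if_neg hki, if_neg hkj]
    _ = r ^ (n - 2) := by rw [Finset.prod_const, hcard]

lemma far_apart {d : ℕ} (hd : 1 ≤ d) {Δ : ℝ} (hΔ : Δ < 1 / 2) {u v : Fin d → ℝ}
    (hu : ∀ k, u k < Δ) (hv : ∀ k, 1 - Δ < v k) :
    Real.sqrt d * (1 - 2 * Δ) < eDist u v := by
  have h12 : (0:ℝ) ≤ 1 - 2 * Δ := by linarith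
  haveI : Nonempty (Fin d) := ⟨⟨0, by omega⟩⟩
  have hsum : (d : ℝ) * (1 - 2 * Δ) ^ 2 < ∑ k, (u k - v k) ^ 2 := by
    have h1 : ∑ _k : Fin d, (1 - 2 * Δ) ^ 2 < ∑ k, (u k - v k) ^ 2 := by
      apply Finset.sum_lt_sum_of_nonempty Finset.univ_nonempty
      intro k _
      have h : 1 - 2 * Δ < v k - u k := by have := hu k; have := hv k; linarith
      calc (1 - 2 * Δ) ^ 2 < (v k - u k) ^ 2 := by
            exact pow_lt_pow_left₀ h h12 (by norm_num)
        _ = (u k - v k) ^ 2 := by ring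
    simpa [Finset.sum_const, nsmul_eq_mul] using h1
  have h2 : Real.sqrt ((d:ℝ) * (1 - 2 * Δ) ^ 2) < Real.sqrt (∑ k, (u k - v k) ^ 2) :=
    Real.sqrt_lt_sqrt (by positivity) hsum
  rw [Real.sqrt_mul (Nat.cast_nonneg d), Real.sqrt_sq h12] at h2
  exact h2

/-- for radius `u = √d(1 - 2Δ)`, the random geometric graph fails to be
complete with probability at least `n(n-1)·Δ^(2d)·(1 - 2Δ^d)^(n-2)`. -/
theorem stmt17 (d n : ℕ) (hd : 1 ≤ d) (hn : 2 ≤ n) (Δ : ℝ) (h0 : 0 < Δ) (h1 : Δ < 1 / 2) :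
    ENNReal.ofReal ((n : ℝ) * ((n : ℝ) - 1) * Δ ^ (2 * d) * (1 - 2 * Δ ^ d) ^ (n - 2)) ≤
      sampleMeasure d n
        {x | ¬ completeProp n (geomGraph x (Real.sqrt d * (1 - 2 * Δ)))} := by
  classical
  haveI : IsProbabilityMeasure (volume.restrict (Set.Icc (0:ℝ) 1)) :=
    ⟨by simp [Real.volume_Icc]⟩
  haveI hprob : IsProbabilityMeasure (cubeMeasure d) := by
    unfold cubeMeasure; infer_instance
  set a : ENNReal := ENNReal.ofReal Δ with ha
  set C0 : Set (Fin d → ℝ) := Set.univ.pi fun _ => Set.Ico (0:ℝ) Δ with hC0def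
  set C1 : Set (Fin d → ℝ) := Set.univ.pi fun _ => Set.Ioc (1 - Δ) 1 with hC1def
  have hΔ1 : Δ ≤ 1 := by linarith
  have hmC0 : MeasurableSet C0 := MeasurableSet.univ_pi fun _ => measurableSet_Ico
  have hmC1 : MeasurableSet C1 := MeasurableSet.univ_pi fun _ => measurableSet_Ioc
  have hμC0 : cubeMeasure d C0 = a ^ d := by
    rw [hC0def, cubeMeasure, Measure.pi_pi]
    have h : volume.restrict (Set.Icc (0:ℝ) 1) (Set.Ico 0 Δ) = a := by
      have hsub0 : Set.Ico (0:ℝ) Δ ⊆ Set.Icc 0 1 := fun y hy => ⟨hy.1, hy.2.le.trans hΔ1⟩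
      rw [Measure.restrict_apply measurableSet_Ico, Set.inter_eq_left.mpr hsub0,
        Real.volume_Ico]
      simp [ha]
    simp [h]
  have hμC1 : cubeMeasure d C1 = a ^ d := by
    rw [hC1def, cubeMeasure, Measure.pi_pi]
    have h : volume.restrict (Set.Icc (0:ℝ) 1) (Set.Ioc (1 - Δ) 1) = a := by
      have hsub1 : Set.Ioc (1 - Δ) 1 ⊆ Set.Icc (0:ℝ) 1 :=
        fun y hy => ⟨le_of_lt (lt_of_le_of_lt (by linarith) hy.1), hy.2⟩
      rw [Measure.restrict_apply measurableSet_Ioc, Set.inter_eq_left.mpr hsub1,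
        Real.volume_Ioc]
      rw [ha]
      congr 1
      ring
    simp [h]
  have k0 : Fin d := ⟨0, by omega⟩
  have hC0C1 : ∀ y : Fin d → ℝ, y ∈ C0 → y ∉ C1 := by
    intro y hy0 hy1
    have a0 := Set.mem_univ_pi.mp hy0 k0
    have a1 := Set.mem_univ_pi.mp hy1 k0
    have : Δ < 1 - Δ := by linarith
    have := a0.2
    have := a1.1
    linarith
  have hμcomp : cubeMeasure d ((C0 ∪ C1)ᶜ) = 1 - 2 * a ^ d := by
    rw [measure_compl (hmC0.union hmC1) (measure_ne_top _ _), measure_univ,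
      measure_union (Set.disjoint_left.mpr fun {y} h0 h1 => hC0C1 y h0 h1) hmC1,
      hμC0, hμC1, two_mul]
  -- the corner events
  set F : Fin n × Fin n → Set (Fin n → Fin d → ℝ) :=
    fun p => Set.univ.pi fun k => if k = p.1 then C0 else if k = p.2 then C1 else (C0 ∪ C1)ᶜ
    with hFdef
  have hmF : ∀ p, MeasurableSet (F p) := by
    intro p
    refine MeasurableSet.univ_pi fun k => ?_
    split_ifs
    exacts [hmC0, hmC1, (hmC0.union hmC1).compl]
  have hmemC0 : ∀ p : Fin n × Fin n, ∀ x ∈ F p, x p.1 ∈ C0 := by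
    intro p x hx
    have h := Set.mem_univ_pi.mp hx p.1
    rwa [if_pos rfl] at h
  have hmemC1 : ∀ p : Fin n × Fin n, p.2 ≠ p.1 → ∀ x ∈ F p, x p.2 ∈ C1 := by
    intro p hp x hx
    have h := Set.mem_univ_pi.mp hx p.2
    rwa [if_neg hp, if_pos rfl] at h
  have hmemComp : ∀ p : Fin n × Fin n, ∀ x ∈ F p, ∀ k, k ≠ p.1 → k ≠ p.2 →
      x k ∉ C0 ∪ C1 := by
    intro p x hx k hk1 hk2
    have h := Set.mem_univ_pi.mp hx k
    rwa [if_neg hk1, if_neg hk2] at h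
  -- pairwise disjointness
  have hpd : ((Finset.univ.offDiag : Finset (Fin n × Fin n)) : Set (Fin n × Fin n)).PairwiseDisjoint F := by
    intro p hp q hq hpq
    have hp' : p.1 ≠ p.2 := (Finset.mem_offDiag.mp (Finset.mem_coe.mp hp)).2.2
    have hq' : q.1 ≠ q.2 := (Finset.mem_offDiag.mp (Finset.mem_coe.mp hq)).2.2
    refine Set.disjoint_left.mpr fun {x} hxp hxq => ?_
    have hcase : p.1 ≠ q.1 ∨ p.2 ≠ q.2 := by
      by_contra h
      push_neg at h
      exact hpq (Prod.ext h.1 h.2)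
    rcases hcase with hc | hc
    · have h0 : x p.1 ∈ C0 := hmemC0 p x hxp
      by_cases he : p.1 = q.2
      · have h1 : x p.1 ∈ C1 := by
          have := hmemC1 q hq'.symm x hxq
          rwa [← he] at this
        exact hC0C1 _ h0 h1
      · exact hmemComp q x hxq p.1 hc he (Or.inl h0)
    · have h1 : x p.2 ∈ C1 := hmemC1 p hp'.symm x hxp
      by_cases he : p.2 = q.1
      · have h0 : x p.2 ∈ C0 := by
          have := hmemC0 q x hxq
          rwa [← he] at this
        exact hC0C1 _ h0 h1
      · exact hmemComp q x hxq p.2 he hc (Or.inr h1)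
  -- measure of each corner event
  have hμF : ∀ p ∈ (Finset.univ.offDiag : Finset (Fin n × Fin n)),
      sampleMeasure d n (F p) = a ^ d * (a ^ d * (1 - 2 * a ^ d) ^ (n - 2)) := by
    intro p hp
    have hp' : p.2 ≠ p.1 := ((Finset.mem_offDiag.mp hp).2.2).symm
    rw [hFdef, sampleMeasure, Measure.pi_pi]
    have h : ∀ k : Fin n,
        cubeMeasure d (if k = p.1 then C0 else if k = p.2 then C1 else (C0 ∪ C1)ᶜ)
        = if k = p.1 then a ^ d else if k = p.2 then a ^ d else 1 - 2 * a ^ d := by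
      intro k
      split_ifs
      exacts [hμC0, hμC1, hμcomp]
    rw [Finset.prod_congr rfl fun k _ => h k, prod_if_pair hp']
  -- total measure of the union
  have hunion : sampleMeasure d n (⋃ p ∈ (Finset.univ.offDiag : Finset (Fin n × Fin n)), F p)
      = ((n * n - n : ℕ) : ENNReal) * (a ^ d * (a ^ d * (1 - 2 * a ^ d) ^ (n - 2))) := by
    rw [measure_biUnion_finset hpd fun p _ => hmF p,
      Finset.sum_congr rfl hμF, Finset.sum_const, Finset.offDiag_card,
      Finset.card_univ, Fintype.card_fin, nsmul_eq_mul]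
  -- the union is contained in the failure event
  have hsub : (⋃ p ∈ (Finset.univ.offDiag : Finset (Fin n × Fin n)), F p) ⊆
      {x | ¬ completeProp n (geomGraph x (Real.sqrt d * (1 - 2 * Δ)))} := by
    intro x hx
    simp only [Set.mem_iUnion] at hx
    obtain ⟨p, hp, hxp⟩ := hx
    have hne : p.1 ≠ p.2 := (Finset.mem_offDiag.mp hp).2.2
    simp only [Set.mem_setOf_eq]
    intro hcomp
    have hadj := hcomp p.1 p.2 hne
    have hle : eDist (x p.1) (x p.2) ≤ Real.sqrt d * (1 - 2 * Δ) :=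
      (by exact hadj : p.1 ≠ p.2 ∧ eDist (x p.1) (x p.2) ≤ Real.sqrt d * (1 - 2 * Δ)).2
    have hx0 := hmemC0 p x hxp
    have hx1 := hmemC1 p hne.symm x hxp
    have hfar := far_apart hd h1 (fun k => (Set.mem_univ_pi.mp hx0 k).2)
      (fun k => (Set.mem_univ_pi.mp hx1 k).1)
    linarith
  -- identify the real bound with the ENNReal expression
  have hΔd : Δ ^ d ≤ Δ := by
    calc Δ ^ d ≤ Δ ^ 1 := pow_le_pow_of_le_one h0.le hΔ1 hd
      _ = Δ := pow_one Δ
  have hb0 : (0:ℝ) ≤ 1 - 2 * Δ ^ d := by nlinarith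
  have hn1 : (1:ℝ) ≤ (n:ℝ) := by exact_mod_cast Nat.one_le_of_lt hn
  have hcast : ((n * n - n : ℕ) : ℝ) = (n:ℝ) * ((n:ℝ) - 1) := by
    have hle' : n ≤ n * n := Nat.le_mul_of_pos_left n (by omega)
    rw [Nat.cast_sub hle']
    push_cast
    ring
  have hE : ENNReal.ofReal ((n : ℝ) * ((n : ℝ) - 1) * Δ ^ (2 * d) * (1 - 2 * Δ ^ d) ^ (n - 2))
      = ((n * n - n : ℕ) : ENNReal) * (a ^ d * (a ^ d * (1 - 2 * a ^ d) ^ (n - 2))) := by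
    have hnn : (0:ℝ) ≤ (n:ℝ) * ((n:ℝ) - 1) := by nlinarith
    rw [ENNReal.ofReal_mul (by positivity), ENNReal.ofReal_mul hnn,
      ← hcast, ENNReal.ofReal_natCast, ENNReal.ofReal_pow h0.le,
      ENNReal.ofReal_pow hb0, ENNReal.ofReal_sub _ (by positivity),
      ENNReal.ofReal_mul (by norm_num), ENNReal.ofReal_pow h0.le, ← ha]
    have h2' : ENNReal.ofReal (2:ℝ) = 2 := by norm_num
    rw [h2', ENNReal.ofReal_one, two_mul d, pow_add]
    ring
  calc ENNReal.ofReal ((n : ℝ) * ((n : ℝ) - 1) * Δ ^ (2 * d) * (1 - 2 * Δ ^ d) ^ (n - 2))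
      = sampleMeasure d n (⋃ p ∈ (Finset.univ.offDiag : Finset (Fin n × Fin n)), F p) := by
        rw [hE, hunion]
    _ ≤ _ := measure_mono hsub

end
end

section
/- Let d ≥ 1, n ≥ 1, and 0 < Δ < 1/4 with (4Δ)^d < 1, and let G ∼ G(X_n; l) be a random geometric graph in [0,1]^d with radius l = √(d − 1 + (1 − 4Δ)²). Then P{G is a complete graph} ≥ (1 − (4Δ)^d)^n. -/
open MeasureTheory Real

noncomputable section

instance cubeIsProb (d : ℕ) : IsProbabilityMeasure (cubeMeasure d) := by
  have : IsProbabilityMeasure (volume.restrict (Set.Icc (0 : ℝ) 1)) :=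
    ⟨by simp [Real.volume_Icc]⟩
  unfold cubeMeasure
  infer_instance

/-- Key deterministic lemma: two good points are close. -/
lemma key_dist {d : ℕ} (Δ : ℝ) (h0 : 0 < Δ) (h1 : Δ < 1 / 4) (x y : Fin d → ℝ)
    (hx : ∀ k, x k ∈ Set.Icc (0 : ℝ) 1) (hy : ∀ k, y k ∈ Set.Icc (0 : ℝ) 1)
    (kx : Fin d) (hkx : x kx ∈ Set.Icc (2 * Δ) (1 - 2 * Δ))
    (ky : Fin d) (hky : y ky ∈ Set.Icc (2 * Δ) (1 - 2 * Δ)) :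
    ∑ k, (x k - y k) ^ 2 ≤ (d : ℝ) - 1 + (1 - 4 * Δ) ^ 2 := by
  have hterm : ∀ k : Fin d, (x k - y k) ^ 2 ≤ 1 := fun k => by
    nlinarith [(hx k).1, (hx k).2, (hy k).1, (hy k).2]
  by_cases hkk : kx = ky
  · subst hkk
    have hmain : (x kx - y kx) ^ 2 ≤ (1 - 4 * Δ) ^ 2 := by
      nlinarith [hkx.1, hkx.2, hky.1, hky.2]
    have hd1 : 1 ≤ d := by
      have : 0 < Fintype.card (Fin d) := Fintype.card_pos_iff.mpr ⟨kx⟩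
      simp at this; omega
    have hrest : ∑ k ∈ Finset.univ.erase kx, (x k - y k) ^ 2 ≤ (d : ℝ) - 1 := by
      calc ∑ k ∈ Finset.univ.erase kx, (x k - y k) ^ 2
          ≤ (Finset.univ.erase kx).card • (1 : ℝ) :=
            Finset.sum_le_card_nsmul _ _ _ (fun k _ => hterm k)
        _ = ((d - 1 : ℕ) : ℝ) := by
            simp [Finset.card_erase_of_mem]
        _ = (d : ℝ) - 1 := by
            rw [Nat.cast_sub hd1]; norm_num
    have hsplit : ∑ k ∈ Finset.univ.erase kx, (x k - y k) ^ 2 + (x kx - y kx) ^ 2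
        = ∑ k, (x k - y k) ^ 2 :=
      Finset.sum_erase_add Finset.univ (fun k => (x k - y k) ^ 2) (Finset.mem_univ kx)
    linarith [hsplit]
  · have hxb : (x kx - y kx) ^ 2 ≤ (1 - 2 * Δ) ^ 2 := by
      nlinarith [hkx.1, hkx.2, (hy kx).1, (hy kx).2]
    have hyb : (x ky - y ky) ^ 2 ≤ (1 - 2 * Δ) ^ 2 := by
      nlinarith [hky.1, hky.2, (hx ky).1, (hx ky).2]
    have hd2 : 2 ≤ d := by
      have : 1 < Fintype.card (Fin d) := Fintype.one_lt_card_iff.mpr ⟨kx, ky, hkk⟩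
      simp at this; omega
    have hky_mem : ky ∈ Finset.univ.erase kx :=
      Finset.mem_erase.mpr ⟨fun h => hkk h.symm, Finset.mem_univ ky⟩
    have hsplit1 : ∑ k ∈ Finset.univ.erase kx, (x k - y k) ^ 2 + (x kx - y kx) ^ 2
        = ∑ k, (x k - y k) ^ 2 :=
      Finset.sum_erase_add Finset.univ (fun k => (x k - y k) ^ 2) (Finset.mem_univ kx)
    have hsplit2 : ∑ k ∈ (Finset.univ.erase kx).erase ky, (x k - y k) ^ 2 + (x ky - y ky) ^ 2
        = ∑ k ∈ Finset.univ.erase kx, (x k - y k) ^ 2 :=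
      Finset.sum_erase_add (Finset.univ.erase kx) (fun k => (x k - y k) ^ 2) hky_mem
    have hrest : ∑ k ∈ (Finset.univ.erase kx).erase ky, (x k - y k) ^ 2 ≤ (d : ℝ) - 2 := by
      calc ∑ k ∈ (Finset.univ.erase kx).erase ky, (x k - y k) ^ 2
          ≤ ((Finset.univ.erase kx).erase ky).card • (1 : ℝ) :=
            Finset.sum_le_card_nsmul _ _ _ (fun k _ => hterm k)
        _ = ((d - 1 - 1 : ℕ) : ℝ) := by
            simp [Finset.card_erase_of_mem, hky_mem]
        _ = (d : ℝ) - 2 := by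
            rw [show d - 1 - 1 = d - 2 by omega, Nat.cast_sub hd2]; norm_num
    nlinarith [hsplit1, hsplit2, hrest, h0]

/-- for radius `l = √(d - 1 + (1 - 4Δ)²)`, the random geometric graph is
complete with probability at least `(1 - (4Δ)^d)^n`. -/
theorem stmt18 (d n : ℕ) (hd : 1 ≤ d) (hn : 1 ≤ n) (Δ : ℝ) (h0 : 0 < Δ) (h1 : Δ < 1 / 4)
    (h2 : (4 * Δ) ^ d < 1) :
    ENNReal.ofReal ((1 - (4 * Δ) ^ d) ^ n) ≤
      sampleMeasure d n
        {x | completeProp n (geomGraph x (Real.sqrt ((d : ℝ) - 1 + (1 - 4 * Δ) ^ 2)))} := by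
  have h4Δ : 0 ≤ 4 * Δ := by linarith
  have h4Δd : (0 : ℝ) ≤ (4 * Δ) ^ d := pow_nonneg h4Δ d
  -- the good set
  set S : Set (Fin d → ℝ) :=
    {p | (∀ k, p k ∈ Set.Icc (0 : ℝ) 1) ∧ ∃ k, p k ∈ Set.Icc (2 * Δ) (1 - 2 * Δ)} with hSdef
  have hmeasS : MeasurableSet S := by
    have hA : MeasurableSet {p : Fin d → ℝ | ∀ k, p k ∈ Set.Icc (0 : ℝ) 1} := by
      rw [Set.setOf_forall]
      exact MeasurableSet.iInter fun k => (measurable_pi_apply k) measurableSet_Icc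
    have hB : MeasurableSet {p : Fin d → ℝ | ∃ k, p k ∈ Set.Icc (2 * Δ) (1 - 2 * Δ)} := by
      rw [Set.setOf_exists]
      exact MeasurableSet.iUnion fun k => (measurable_pi_apply k) measurableSet_Icc
    exact hA.inter hB
  -- per-coordinate bad probability
  have hcoord : (volume.restrict (Set.Icc (0 : ℝ) 1)) (Set.Icc (2 * Δ) (1 - 2 * Δ))ᶜ
      = ENNReal.ofReal (4 * Δ) := by
    rw [Measure.restrict_apply measurableSet_Icc.compl]
    have hset : (Set.Icc (2 * Δ) (1 - 2 * Δ))ᶜ ∩ Set.Icc (0 : ℝ) 1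
        = Set.Icc (0 : ℝ) 1 \ Set.Icc (2 * Δ) (1 - 2 * Δ) := by
      rw [Set.diff_eq, Set.inter_comm]
    rw [hset, measure_diff (Set.Icc_subset_Icc (by linarith) (by linarith))
      measurableSet_Icc.nullMeasurableSet (by simp [Real.volume_Icc]),
      Real.volume_Icc, Real.volume_Icc, ← ENNReal.ofReal_sub _ (by linarith)]
    ring_nf
  -- bound on the bad set
  have hAcube : cubeMeasure d {p : Fin d → ℝ | ∀ k, p k ∈ Set.Icc (0 : ℝ) 1} = 1 := by
    have : {p : Fin d → ℝ | ∀ k, p k ∈ Set.Icc (0 : ℝ) 1}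
        = Set.univ.pi fun _ => Set.Icc (0 : ℝ) 1 := by
      ext p
      simp only [Set.mem_setOf_eq, Set.mem_pi, Set.mem_univ, forall_true_left, true_implies]
    rw [this, cubeMeasure, Measure.pi_pi]
    simp [Real.volume_Icc]
  have hScompl : cubeMeasure d Sᶜ ≤ ENNReal.ofReal ((4 * Δ) ^ d) := by
    have hsub : Sᶜ ⊆ {p : Fin d → ℝ | ∀ k, p k ∈ Set.Icc (0 : ℝ) 1}ᶜ ∪
        Set.univ.pi (fun _ : Fin d => (Set.Icc (2 * Δ) (1 - 2 * Δ))ᶜ) := by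
      intro p hp
      by_cases h : ∀ k, p k ∈ Set.Icc (0 : ℝ) 1
      · right
        intro k _
        simp only [Set.mem_compl_iff]
        intro hk
        exact hp ⟨h, k, hk⟩
      · left; exact h
    have hAc : cubeMeasure d {p : Fin d → ℝ | ∀ k, p k ∈ Set.Icc (0 : ℝ) 1}ᶜ = 0 := by
      have hAmeas : MeasurableSet {p : Fin d → ℝ | ∀ k, p k ∈ Set.Icc (0 : ℝ) 1} := by
        rw [Set.setOf_forall]
        exact MeasurableSet.iInter fun k => (measurable_pi_apply k) measurableSet_Icc
      rw [prob_compl_eq_one_sub hAmeas, hAcube, tsub_self]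
    have hBc : cubeMeasure d (Set.univ.pi fun _ : Fin d => (Set.Icc (2 * Δ) (1 - 2 * Δ))ᶜ)
        = ENNReal.ofReal ((4 * Δ) ^ d) := by
      rw [cubeMeasure, Measure.pi_pi]
      simp only [hcoord, Finset.prod_const, Finset.card_univ, Fintype.card_fin]
      rw [← ENNReal.ofReal_pow h4Δ]
    calc cubeMeasure d Sᶜ
        ≤ cubeMeasure d ({p : Fin d → ℝ | ∀ k, p k ∈ Set.Icc (0 : ℝ) 1}ᶜ ∪
            Set.univ.pi fun _ : Fin d => (Set.Icc (2 * Δ) (1 - 2 * Δ))ᶜ) :=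
          measure_mono hsub
      _ ≤ cubeMeasure d {p : Fin d → ℝ | ∀ k, p k ∈ Set.Icc (0 : ℝ) 1}ᶜ +
            cubeMeasure d (Set.univ.pi fun _ : Fin d => (Set.Icc (2 * Δ) (1 - 2 * Δ))ᶜ) :=
          measure_union_le _ _
      _ = ENNReal.ofReal ((4 * Δ) ^ d) := by rw [hAc, hBc, zero_add]
  -- lower bound on the good set
  have hSge : ENNReal.ofReal (1 - (4 * Δ) ^ d) ≤ cubeMeasure d S := by
    have hu : (1 : ENNReal) ≤ cubeMeasure d S + cubeMeasure d Sᶜ := by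
      have := measure_union_le (μ := cubeMeasure d) S Sᶜ
      rw [Set.union_compl_self] at this
      simpa using this
    calc ENNReal.ofReal (1 - (4 * Δ) ^ d)
        = 1 - ENNReal.ofReal ((4 * Δ) ^ d) := by
          rw [ENNReal.ofReal_sub _ h4Δd, ENNReal.ofReal_one]
      _ ≤ 1 - cubeMeasure d Sᶜ := tsub_le_tsub_left hScompl 1
      _ ≤ cubeMeasure d S := tsub_le_iff_right.mpr hu
  -- the good event implies completeness
  have hsubset : Set.univ.pi (fun _ : Fin n => S) ⊆
      {x : Fin n → Fin d → ℝ |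
        completeProp n (geomGraph x (Real.sqrt ((d : ℝ) - 1 + (1 - 4 * Δ) ^ 2)))} := by
    intro x hx i j hij
    obtain ⟨hci, ki, hki⟩ := hx i (Set.mem_univ i)
    obtain ⟨hcj, kj, hkj⟩ := hx j (Set.mem_univ j)
    refine ⟨hij, ?_⟩
    exact Real.sqrt_le_sqrt (key_dist Δ h0 h1 (x i) (x j) hci hcj ki hki kj hkj)
  -- put it together
  calc ENNReal.ofReal ((1 - (4 * Δ) ^ d) ^ n)
      = (ENNReal.ofReal (1 - (4 * Δ) ^ d)) ^ n := ENNReal.ofReal_pow (by linarith) n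
    _ ≤ (cubeMeasure d S) ^ n := by gcongr
    _ = sampleMeasure d n (Set.univ.pi fun _ : Fin n => S) := by
        rw [sampleMeasure, Measure.pi_pi]
        simp
    _ ≤ _ := measure_mono hsubset

end
end
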